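/- arXiv:1811.09770 — 5 statements merged into one kernel-verified Lean document; each statement's English description precedes it below -/
import Mathlib

section
/- There exists β₀ > 0 such that the following holds whenever β ≥ β₀. Let μ_β be any subsequential weak limit of the finite-volume Ising lattice gauge measures. Then for any finite set P of plaquettes of ℤ⁴ there is a constant C_P depending only on P such that the μ_β-probability of the event that σ_p = −1 for all p ∈ P is at most C_P·e^{−2β·|P|}. -/
/-! Core definitions for Ising lattice gauge theory on ℤ⁴. -/

/-- A vertex of the lattice `ℤ⁴`. -/
abbrev V4 := Fin 4 → ℤ

/-- The unit vector in direction `i`. -/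
def unitVec (i : Fin 4) : V4 := fun m => if m = i then 1 else 0

/-- An (undirected, positively presented) nearest-neighbor edge of `ℤ⁴`:
the pair `(x, i)` stands for the edge from `x` to `x + eᵢ`. -/
abbrev Edge := V4 × Fin 4

/-- A plaquette `(x, i, j)`: the unit square with corner `x` spanned by directions `i, j`.
It is a genuine (positively oriented) plaquette when `i < j`. -/
abbrev Plaq := V4 × Fin 4 × Fin 4

/-- The two vertices of an edge. -/
def edgeVerts (e : Edge) : Finset V4 := {e.1, e.1 + unitVec e.2}

/-- The four edges of a plaquette. -/
def plaqEdges (p : Plaq) : Finset Edge :=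
  {(p.1, p.2.1), (p.1, p.2.2), (p.1 + unitVec p.2.1, p.2.2), (p.1 + unitVec p.2.2, p.2.1)}

/-- The four vertices of a plaquette. -/
def plaqVerts (p : Plaq) : Finset V4 :=
  {p.1, p.1 + unitVec p.2.1, p.1 + unitVec p.2.2, p.1 + unitVec p.2.1 + unitVec p.2.2}

/-- The plaquette variable `σ_p = σ_{e₁}σ_{e₂}σ_{e₃}σ_{e₄}` of a (±1-valued) spin
configuration `σ` on the edges of `ℤ⁴`. -/
def plaqSpin (σ : Edge → ℝ) (p : Plaq) : ℝ :=
  σ (p.1, p.2.1) * σ (p.1, p.2.2) * σ (p.1 + unitVec p.2.1, p.2.2) * σ (p.1 + unitVec p.2.2, p.2.1)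

/-- The vertex set of the cube `[a₁, a₁+w] × ⋯ × [a₄, a₄+w] ∩ ℤ⁴`. -/
noncomputable def cubeV (a : V4) (w : ℕ) : Finset V4 :=
  Fintype.piFinset fun m => Finset.Icc (a m) (a m + w)

/-- The set of nearest-neighbor edges of the cube with corner `a` and width `w`
(both endpoints in the cube). -/
noncomputable def cubeEdges (a : V4) (w : ℕ) : Finset Edge :=
  (cubeV a w ×ˢ (Finset.univ : Finset (Fin 4))).filter fun e => e.1 + unitVec e.2 ∈ cubeV a w

/-- The set of plaquettes of the cube with corner `a` and width `w`
(those with `i < j` all four of whose edges/vertices lie in the cube). -/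
noncomputable def cubePlaqs (a : V4) (w : ℕ) : Finset Plaq :=
  ((cubeV a w) ×ˢ ((Finset.univ : Finset (Fin 4)) ×ˢ (Finset.univ : Finset (Fin 4)))).filter
    fun p => p.2.1 < p.2.2 ∧ ∀ v ∈ plaqVerts p, v ∈ cubeV a w

/-- A spin configuration on the edges of the cube (`true` = spin `+1`, `false` = spin `-1`). -/
abbrev Config (a : V4) (w : ℕ) := {e : Edge // e ∈ cubeEdges a w} → Bool

/-- The ±1 spin value of a Boolean. -/
def boolSpin (b : Bool) : ℝ := if b then 1 else -1

/-- Extension of a configuration on a cube to all of `ℤ⁴`, putting spin `1` outside. -/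
noncomputable def extSpin (a : V4) (w : ℕ) (σ : Config a w) : Edge → ℝ :=
  fun e => if h : e ∈ cubeEdges a w then boolSpin (σ ⟨e, h⟩) else 1

/-- `∑_{p ∈ P(B)} σ_p`, i.e. minus the Hamiltonian of the configuration `σ` on the cube. -/
noncomputable def energy (a : V4) (w : ℕ) (σ : Config a w) : ℝ :=
  ∑ p ∈ cubePlaqs a w, plaqSpin (extSpin a w σ) p

/-- Expectation `⟨f⟩` in Ising lattice gauge theory on the cube with corner `a` and width `w`,
at inverse coupling strength `β`, with free boundary condition. -/
noncomputable def gibbsExp (a : V4) (w : ℕ) (β : ℝ) (f : (Edge → ℝ) → ℝ) : ℝ :=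
  (∑ σ : Config a w, f (extSpin a w σ) * Real.exp (β * energy a w σ)) /
    (∑ σ : Config a w, Real.exp (β * energy a w σ))

/-- Expectation `⟨f⟩_{N,β}` in Ising lattice gauge theory on `B_N = [-N,N]⁴ ∩ ℤ⁴`
at inverse coupling strength `β`, with free boundary condition. -/
noncomputable def gibbsExpN (N : ℕ) (β : ℝ) (f : (Edge → ℝ) → ℝ) : ℝ :=
  gibbsExp (fun _ => -(N : ℤ)) (2 * N) β f

/-- The Wilson loop observable `W_γ = ∏_{e ∈ γ} σ_e`. -/
def wilson (γ : Finset Edge) (σ : Edge → ℝ) : ℝ := ∏ e ∈ γ, σ e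

/-- `γ` is a generalized loop: a nonempty finite set of edges such that every vertex of `ℤ⁴`
belongs to an even number of edges of `γ` (equivalently, a finite union of pairwise
edge-disjoint self-avoiding loops). -/
def IsGenLoop (γ : Finset Edge) : Prop :=
  γ.Nonempty ∧ ∀ v : V4, Even (γ.filter (fun e => v ∈ edgeVerts e)).card

/-- `e` is a corner edge of `γ`: some other edge `e' ∈ γ` shares a common plaquette with `e`. -/
def IsCornerEdge (γ : Finset Edge) (e : Edge) : Prop :=
  e ∈ γ ∧ ∃ e' ∈ γ, e' ≠ e ∧ ∃ p : Plaq, p.2.1 < p.2.2 ∧ e ∈ plaqEdges p ∧ e' ∈ plaqEdges p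

/-- The number of corner edges of `γ`. -/
noncomputable def cornerCount (γ : Finset Edge) : ℕ :=
  {e ∈ (γ : Set Edge) | IsCornerEdge γ e}.ncard

open MeasureTheory

/-- Extension of a configuration on a cube to all of `ℤ⁴`, by spin `+1` (`true`) outside. -/
noncomputable def extBool (a : V4) (w : ℕ) (σ : Config a w) : Edge → Bool :=
  fun e => if h : e ∈ cubeEdges a w then σ ⟨e, h⟩ else true

/-- Ising lattice gauge theory on `B_N = [-N,N]⁴ ∩ ℤ⁴` at inverse coupling strength `β` with
free boundary condition, lifted to a probability measure on the space
`Σ = {-1,1}^{E(ℤ⁴)}` (encoded as `Edge → Bool`) of spin configurations on all of `ℤ⁴` by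
setting `σ_e = 1` outside `E_N`. -/
noncomputable def gibbsMeasureN (N : ℕ) (β : ℝ) : Measure (Edge → Bool) :=
  (∑ σ : Config (fun _ => -(N : ℤ)) (2 * N),
      ENNReal.ofReal (Real.exp (β * energy (fun _ => -(N : ℤ)) (2 * N) σ)))⁻¹ •
    ∑ σ : Config (fun _ => -(N : ℤ)) (2 * N),
      ENNReal.ofReal (Real.exp (β * energy (fun _ => -(N : ℤ)) (2 * N) σ)) •
        Measure.dirac (extBool (fun _ => -(N : ℤ)) (2 * N) σ)

/-- `μ` is a subsequential weak limit, as `N → ∞`, of the finite-volume Ising lattice gauge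
measures on `Σ = {-1,1}^{E(ℤ⁴)}` (with its product topology) at inverse coupling `β`. -/
def IsGibbsLimit (β : ℝ) (μ : Measure (Edge → Bool)) : Prop :=
  IsProbabilityMeasure μ ∧
    ∃ φ : ℕ → ℕ, StrictMono φ ∧
      ∀ f : (Edge → Bool) → ℝ, Continuous f →
        Filter.Tendsto (fun k => ∫ x, f x ∂gibbsMeasureN (φ k) β)
          Filter.atTop (nhds (∫ x, f x ∂μ))

/-- The plaquette variable `σ_p` of a configuration `x : Edge → Bool`. -/
noncomputable def plaqSpinB (x : Edge → Bool) (p : Plaq) : ℝ :=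
  plaqSpin (fun e => boolSpin (x e)) p

section RarityAux
open MeasureTheory Real

namespace RarityAux

lemma boolSpin_pm (b : Bool) : boolSpin b = 1 ∨ boolSpin b = -1 := by
  cases b <;> simp [boolSpin]

lemma boolSpin_beq (x y : Bool) : boolSpin (x == y) = boolSpin x * boolSpin y := by
  cases x <;> cases y <;> simp [boolSpin]

variable (a : V4) (w : ℕ)

lemma extSpin_eq (σ : Config a w) (e : Edge) :
    extSpin a w σ e = boolSpin (extBool a w σ e) := by
  unfold extSpin extBool
  split <;> simp [boolSpin]

lemma plaqSpinB_pm (x : Edge → Bool) (p : Plaq) :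
    plaqSpinB x p = 1 ∨ plaqSpinB x p = -1 := by
  unfold plaqSpinB plaqSpin
  rcases boolSpin_pm (x (p.1, p.2.1)) with h1 | h1 <;>
  rcases boolSpin_pm (x (p.1, p.2.2)) with h2 | h2 <;>
  rcases boolSpin_pm (x (p.1 + unitVec p.2.1, p.2.2)) with h3 | h3 <;>
  rcases boolSpin_pm (x (p.1 + unitVec p.2.2, p.2.1)) with h4 | h4 <;>
  simp only [h1, h2, h3, h4] <;> norm_num

lemma plaqSpinB_extBool (σ : Config a w) (p : Plaq) :
    plaqSpinB (extBool a w σ) p = plaqSpin (extSpin a w σ) p := by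
  unfold plaqSpinB plaqSpin
  rw [extSpin_eq, extSpin_eq, extSpin_eq, extSpin_eq]

lemma plaqSpin_ext_pm (σ : Config a w) (p : Plaq) :
    plaqSpin (extSpin a w σ) p = 1 ∨ plaqSpin (extSpin a w σ) p = -1 := by
  rw [← plaqSpinB_extBool]; exact plaqSpinB_pm _ _

/-- Pointwise product of configurations (as ±1 spins). -/
def cmul (σ τ : Config a w) : Config a w := fun i => σ i == τ i

lemma cmul_cmul (σ τ : Config a w) : cmul a w σ (cmul a w σ τ) = τ := by
  funext i
  show (σ i == (σ i == τ i)) = τ i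
  cases σ i <;> cases τ i <;> rfl

lemma extBool_cmul (σ τ : Config a w) (e : Edge) :
    extBool a w (cmul a w σ τ) e = (extBool a w σ e == extBool a w τ e) := by
  unfold extBool cmul
  by_cases h : e ∈ cubeEdges a w <;> simp [h]

lemma extSpin_cmul (σ τ : Config a w) (e : Edge) :
    extSpin a w (cmul a w σ τ) e = extSpin a w σ e * extSpin a w τ e := by
  rw [extSpin_eq, extSpin_eq, extSpin_eq, extBool_cmul, boolSpin_beq]

lemma plaqSpin_cmul (σ τ : Config a w) (p : Plaq) :
    plaqSpin (extSpin a w (cmul a w σ τ)) p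
      = plaqSpin (extSpin a w σ) p * plaqSpin (extSpin a w τ) p := by
  unfold plaqSpin
  rw [extSpin_cmul, extSpin_cmul, extSpin_cmul, extSpin_cmul]
  ring

/-- GKS-type positivity: the sum over all configurations of a product of plaquette
spins is nonnegative (character sum argument). -/
lemma sum_prod_nonneg (R : Finset Plaq) :
    0 ≤ ∑ σ : Config a w, ∏ p ∈ R, plaqSpin (extSpin a w σ) p := by
  set m : Config a w → ℝ := fun σ => ∏ p ∈ R, plaqSpin (extSpin a w σ) p with hm
  have hpm : ∀ σ, m σ = 1 ∨ m σ = -1 := by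
    intro σ
    refine Finset.prod_induction _ (fun r => r = 1 ∨ r = -1) ?_ (Or.inl rfl) ?_
    · rintro x y (hx | hx) (hy | hy) <;> rw [hx, hy] <;> norm_num
    · intro p _; exact plaqSpin_ext_pm a w σ p
  have hmul : ∀ σ τ, m (cmul a w σ τ) = m σ * m τ := by
    intro σ τ
    simp only [hm]
    rw [← Finset.prod_mul_distrib]
    exact Finset.prod_congr rfl fun p _ => plaqSpin_cmul a w σ τ p
  by_cases hall : ∀ σ, m σ = 1
  · refine Finset.sum_nonneg fun σ _ => ?_
    have h := hall σ
    simp only [hm] at h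
    rw [h]; norm_num
  · push_neg at hall
    obtain ⟨σ₀, h₀⟩ := hall
    have h₀' : m σ₀ = -1 := (hpm σ₀).resolve_left h₀
    have hbijf : Function.Bijective (cmul a w σ₀) := by
      constructor
      · intro x y hxy
        have := congrArg (cmul a w σ₀) hxy
        rwa [cmul_cmul, cmul_cmul] at this
      · intro τ; exact ⟨cmul a w σ₀ τ, cmul_cmul a w σ₀ τ⟩
    have hbij : ∑ σ : Config a w, m (cmul a w σ₀ σ) = ∑ σ : Config a w, m σ :=
      Fintype.sum_bijective (cmul a w σ₀) hbijf _ _ (fun σ => rfl)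
    have key : ∑ σ : Config a w, m σ = - ∑ σ : Config a w, m σ := by
      calc ∑ σ : Config a w, m σ = ∑ σ : Config a w, m (cmul a w σ₀ σ) := hbij.symm
        _ = ∑ σ : Config a w, m σ₀ * m σ := Finset.sum_congr rfl fun σ _ => hmul σ₀ σ
        _ = m σ₀ * ∑ σ : Config a w, m σ := by rw [Finset.mul_sum]
        _ = - ∑ σ : Config a w, m σ := by rw [h₀']; ring
    linarith

/-- GKS first inequality for the Ising lattice gauge measure (with couplings on `Q`). -/
lemma sum_prod_exp_nonneg {β : ℝ} (hβ : 0 ≤ β) (Q : Finset Plaq) :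
    ∀ S : Finset Plaq, Disjoint S Q →
      0 ≤ ∑ σ : Config a w, (∏ p ∈ S, plaqSpin (extSpin a w σ) p) *
            Real.exp (β * ∑ p ∈ Q, plaqSpin (extSpin a w σ) p) := by
  classical
  induction Q using Finset.induction_on with
  | empty =>
      intro S _
      simpa using sum_prod_nonneg a w S
  | @insert q Q hq ih =>
      intro S hS
      rw [Finset.disjoint_insert_right] at hS
      have key : ∀ σ : Config a w,
          (∏ p ∈ S, plaqSpin (extSpin a w σ) p) *
              Real.exp (β * ∑ p ∈ insert q Q, plaqSpin (extSpin a w σ) p)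
            = Real.cosh β * ((∏ p ∈ S, plaqSpin (extSpin a w σ) p) *
                Real.exp (β * ∑ p ∈ Q, plaqSpin (extSpin a w σ) p))
              + Real.sinh β * ((∏ p ∈ insert q S, plaqSpin (extSpin a w σ) p) *
                Real.exp (β * ∑ p ∈ Q, plaqSpin (extSpin a w σ) p)) := by
        intro σ
        rw [Finset.sum_insert hq, Finset.prod_insert hS.1, mul_add, Real.exp_add]
        rcases plaqSpin_ext_pm a w σ q with h | h <;> rw [h]
        · rw [mul_one, ← Real.cosh_add_sinh]; ring
        · rw [mul_neg_one, ← Real.cosh_sub_sinh]; ring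
      have hsplit : (∑ σ : Config a w, (∏ p ∈ S, plaqSpin (extSpin a w σ) p) *
              Real.exp (β * ∑ p ∈ insert q Q, plaqSpin (extSpin a w σ) p))
          = Real.cosh β * (∑ σ : Config a w, (∏ p ∈ S, plaqSpin (extSpin a w σ) p) *
                Real.exp (β * ∑ p ∈ Q, plaqSpin (extSpin a w σ) p))
            + Real.sinh β * (∑ σ : Config a w, (∏ p ∈ insert q S, plaqSpin (extSpin a w σ) p) *
                Real.exp (β * ∑ p ∈ Q, plaqSpin (extSpin a w σ) p)) := by
        rw [Finset.sum_congr rfl fun σ _ => key σ, Finset.sum_add_distrib,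
          ← Finset.mul_sum, ← Finset.mul_sum]
      rw [hsplit]
      have h1 : Disjoint (insert q S) Q := by
        rw [Finset.disjoint_insert_left]; exact ⟨hq, hS.2⟩
      exact add_nonneg (mul_nonneg (Real.cosh_pos β).le (ih S hS.2))
        (mul_nonneg (Real.sinh_nonneg_iff.mpr hβ) (ih _ h1))

/-- The finite-volume Peierls-type estimate. -/
lemma finvol {β : ℝ} (hβ : 0 ≤ β) (P : Finset Plaq) (hP : P ⊆ cubePlaqs a w) :
    ∑ σ : Config a w,
        (∏ p ∈ P, (1 - plaqSpin (extSpin a w σ) p) / 2) * Real.exp (β * energy a w σ)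
      ≤ 2 ^ P.card * Real.exp (-2 * β * (P.card : ℝ)) *
          ∑ σ : Config a w, Real.exp (β * energy a w σ) := by
  classical
  set c : ℝ := (P.card : ℝ) with hc
  set Q : Finset Plaq := cubePlaqs a w \ P with hQdef
  have hdisj : Disjoint P Q := Finset.disjoint_sdiff
  have henergy : ∀ σ : Config a w, energy a w σ =
      (∑ p ∈ Q, plaqSpin (extSpin a w σ) p) + ∑ p ∈ P, plaqSpin (extSpin a w σ) p := by
    intro σ
    rw [energy, ← Finset.sum_sdiff hP]
  have hee : Real.exp (-(β * c)) * Real.exp (β * c) = 1 := by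
    rw [← Real.exp_add]; simp
  -- Step (i): pointwise bound on the numerator terms
  have h1 : ∀ σ : Config a w,
      (∏ p ∈ P, (1 - plaqSpin (extSpin a w σ) p) / 2) * Real.exp (β * energy a w σ)
        ≤ Real.exp (-(β * c)) * Real.exp (β * ∑ p ∈ Q, plaqSpin (extSpin a w σ) p) := by
    intro σ
    by_cases hA : ∀ p ∈ P, plaqSpin (extSpin a w σ) p = -1
    · have hsum : ∑ p ∈ P, plaqSpin (extSpin a w σ) p = -c := by
        rw [Finset.sum_congr rfl hA, Finset.sum_const, hc]
        simp
      have hprod : ∏ p ∈ P, (1 - plaqSpin (extSpin a w σ) p) / 2 = 1 :=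
        Finset.prod_eq_one fun p hp => by rw [hA p hp]; norm_num
      rw [hprod, one_mul, henergy σ, hsum, mul_add, Real.exp_add, mul_neg]
      ring_nf
      exact le_refl _
    · push_neg at hA
      obtain ⟨p, hp, hne⟩ := hA
      have hone : plaqSpin (extSpin a w σ) p = 1 :=
        (plaqSpin_ext_pm a w σ p).resolve_right hne
      have hzero : ∏ p ∈ P, (1 - plaqSpin (extSpin a w σ) p) / 2 = 0 :=
        Finset.prod_eq_zero hp (by rw [hone]; norm_num)
      rw [hzero, zero_mul]
      positivity
  -- Step (ii): GKS lower bound for the free partition function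
  have h2 : (∑ σ : Config a w, Real.exp (β * ∑ p ∈ Q, plaqSpin (extSpin a w σ) p))
      ≤ ∑ σ : Config a w, (∏ p ∈ P, (1 + plaqSpin (extSpin a w σ) p)) *
          Real.exp (β * ∑ p ∈ Q, plaqSpin (extSpin a w σ) p) := by
    have expand : ∀ σ : Config a w, (∏ p ∈ P, (1 + plaqSpin (extSpin a w σ) p)) *
        Real.exp (β * ∑ p ∈ Q, plaqSpin (extSpin a w σ) p)
        = ∑ t ∈ P.powerset, (∏ p ∈ P \ t, plaqSpin (extSpin a w σ) p) *
            Real.exp (β * ∑ p ∈ Q, plaqSpin (extSpin a w σ) p) := by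
      intro σ
      rw [Finset.prod_add, Finset.sum_mul]
      refine Finset.sum_congr rfl fun t _ => ?_
      rw [Finset.prod_const_one, one_mul]
    rw [Finset.sum_congr rfl fun σ _ => expand σ, Finset.sum_comm]
    have hterm : ∀ t ∈ P.powerset,
        0 ≤ ∑ σ : Config a w, (∏ p ∈ P \ t, plaqSpin (extSpin a w σ) p) *
            Real.exp (β * ∑ p ∈ Q, plaqSpin (extSpin a w σ) p) := fun t _ =>
      sum_prod_exp_nonneg a w hβ Q (P \ t) (hdisj.mono_left (Finset.sdiff_subset))
    have hPmem : P ∈ P.powerset := Finset.mem_powerset_self P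
    have := Finset.single_le_sum hterm hPmem
    simpa [Finset.sdiff_self] using this
  -- Step (iii): pointwise upper bound relating the free sum back to Z
  have h3 : Real.exp (β * c) *
      (∑ σ : Config a w, (∏ p ∈ P, (1 + plaqSpin (extSpin a w σ) p)) *
          Real.exp (β * ∑ p ∈ Q, plaqSpin (extSpin a w σ) p))
      ≤ 2 ^ P.card * ∑ σ : Config a w, Real.exp (β * energy a w σ) := by
    rw [Finset.mul_sum, Finset.mul_sum]
    refine Finset.sum_le_sum fun σ _ => ?_
    by_cases hA : ∀ p ∈ P, plaqSpin (extSpin a w σ) p = 1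
    · have hsum : ∑ p ∈ P, plaqSpin (extSpin a w σ) p = c := by
        rw [Finset.sum_congr rfl hA, Finset.sum_const, hc]
        simp
      have hprod : ∏ p ∈ P, (1 + plaqSpin (extSpin a w σ) p) = 2 ^ P.card := by
        calc ∏ p ∈ P, (1 + plaqSpin (extSpin a w σ) p)
            = ∏ _p ∈ P, (2 : ℝ) :=
              Finset.prod_congr rfl fun p hp => by rw [hA p hp]; norm_num
          _ = 2 ^ P.card := Finset.prod_const 2
      rw [hprod, henergy σ, hsum, mul_add, Real.exp_add]
      exact le_of_eq (by ring)
    · push_neg at hA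
      obtain ⟨p, hp, hne⟩ := hA
      have hmone : plaqSpin (extSpin a w σ) p = -1 :=
        (plaqSpin_ext_pm a w σ p).resolve_left hne
      have hzero : ∏ p ∈ P, (1 + plaqSpin (extSpin a w σ) p) = 0 :=
        Finset.prod_eq_zero hp (by rw [hmone]; norm_num)
      rw [hzero, zero_mul, mul_zero]
      positivity
  -- Assemble
  have hNum : ∑ σ : Config a w,
      (∏ p ∈ P, (1 - plaqSpin (extSpin a w σ) p) / 2) * Real.exp (β * energy a w σ)
      ≤ Real.exp (-(β * c)) *
        ∑ σ : Config a w, Real.exp (β * ∑ p ∈ Q, plaqSpin (extSpin a w σ) p) := by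
    rw [Finset.mul_sum]
    exact Finset.sum_le_sum fun σ _ => h1 σ
  have hmid : Real.exp (-(β * c)) *
      (∑ σ : Config a w, Real.exp (β * ∑ p ∈ Q, plaqSpin (extSpin a w σ) p))
      ≤ Real.exp (-(β * c)) * (Real.exp (-(β * c)) *
          (2 ^ P.card * ∑ σ : Config a w, Real.exp (β * energy a w σ))) := by
    refine mul_le_mul_of_nonneg_left ?_ (Real.exp_nonneg _)
    calc (∑ σ : Config a w, Real.exp (β * ∑ p ∈ Q, plaqSpin (extSpin a w σ) p))
        ≤ ∑ σ : Config a w, (∏ p ∈ P, (1 + plaqSpin (extSpin a w σ) p)) *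
            Real.exp (β * ∑ p ∈ Q, plaqSpin (extSpin a w σ) p) := h2
      _ = Real.exp (-(β * c)) * (Real.exp (β * c) *
            ∑ σ : Config a w, (∏ p ∈ P, (1 + plaqSpin (extSpin a w σ) p)) *
              Real.exp (β * ∑ p ∈ Q, plaqSpin (extSpin a w σ) p)) := by
          rw [← mul_assoc, hee, one_mul]
      _ ≤ Real.exp (-(β * c)) * (2 ^ P.card *
            ∑ σ : Config a w, Real.exp (β * energy a w σ)) :=
          mul_le_mul_of_nonneg_left h3 (Real.exp_nonneg _)
  have hexp2 : Real.exp (-(β * c)) * Real.exp (-(β * c)) = Real.exp (-2 * β * c) := by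
    rw [← Real.exp_add]; congr 1; ring
  calc ∑ σ : Config a w,
      (∏ p ∈ P, (1 - plaqSpin (extSpin a w σ) p) / 2) * Real.exp (β * energy a w σ)
      ≤ Real.exp (-(β * c)) *
        ∑ σ : Config a w, Real.exp (β * ∑ p ∈ Q, plaqSpin (extSpin a w σ) p) := hNum
    _ ≤ Real.exp (-(β * c)) * (Real.exp (-(β * c)) *
          (2 ^ P.card * ∑ σ : Config a w, Real.exp (β * energy a w σ))) := hmid
    _ = 2 ^ P.card * Real.exp (-2 * β * c) *
          ∑ σ : Config a w, Real.exp (β * energy a w σ) := by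
        rw [← mul_assoc, hexp2]; ring

lemma integrable_dirac_real {α : Type*} [MeasurableSpace α] [MeasurableSingletonClass α]
    {f : α → ℝ} (hf : Measurable f) (x : α) :
    MeasureTheory.Integrable f (MeasureTheory.Measure.dirac x) := by
  refine ⟨hf.aestronglyMeasurable, ?_⟩
  show (∫⁻ a, (‖f a‖₊ : ENNReal) ∂MeasureTheory.Measure.dirac x) < ⊤
  rw [MeasureTheory.lintegral_dirac]
  exact ENNReal.coe_lt_top

lemma integral_gibbs (β : ℝ) {f : (Edge → Bool) → ℝ} (hf : Measurable f) :
    (∫ x, f x ∂((∑ σ : Config a w, ENNReal.ofReal (Real.exp (β * energy a w σ)))⁻¹ •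
        ∑ σ : Config a w, ENNReal.ofReal (Real.exp (β * energy a w σ)) •
          MeasureTheory.Measure.dirac (extBool a w σ)))
      = (∑ σ : Config a w, Real.exp (β * energy a w σ))⁻¹ *
          ∑ σ : Config a w, f (extBool a w σ) * Real.exp (β * energy a w σ) := by
  have hInt : ∀ σ : Config a w, MeasureTheory.Integrable f
      (ENNReal.ofReal (Real.exp (β * energy a w σ)) •
        MeasureTheory.Measure.dirac (extBool a w σ)) :=
    fun σ => (integrable_dirac_real hf _).smul_measure ENNReal.ofReal_ne_top
  rw [MeasureTheory.integral_smul_measure,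
    MeasureTheory.integral_finset_sum_measure (fun σ _ => hInt σ)]
  have hpt : ∀ σ : Config a w,
      (∫ x, f x ∂(ENNReal.ofReal (Real.exp (β * energy a w σ)) •
          MeasureTheory.Measure.dirac (extBool a w σ)))
        = f (extBool a w σ) * Real.exp (β * energy a w σ) := by
    intro σ
    rw [MeasureTheory.integral_smul_measure, MeasureTheory.integral_dirac,
      ENNReal.toReal_ofReal (Real.exp_nonneg _), smul_eq_mul, mul_comm]
  have hZ : (∑ σ : Config a w, ENNReal.ofReal (Real.exp (β * energy a w σ))).toReal
      = ∑ σ : Config a w, Real.exp (β * energy a w σ) := by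
    rw [ENNReal.toReal_sum (fun σ _ => ENNReal.ofReal_ne_top)]
    exact Finset.sum_congr rfl fun σ _ => ENNReal.toReal_ofReal (Real.exp_nonneg _)
  rw [Finset.sum_congr rfl fun σ _ => hpt σ, smul_eq_mul, ENNReal.toReal_inv, hZ]

lemma integral_gibbsN (N : ℕ) (β : ℝ) {f : (Edge → Bool) → ℝ} (hf : Measurable f) :
    (∫ x, f x ∂gibbsMeasureN N β)
      = (∑ σ : Config (fun _ => -(N : ℤ)) (2 * N),
            Real.exp (β * energy (fun _ => -(N : ℤ)) (2 * N) σ))⁻¹ *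
          ∑ σ : Config (fun _ => -(N : ℤ)) (2 * N),
            f (extBool (fun _ => -(N : ℤ)) (2 * N) σ) *
              Real.exp (β * energy (fun _ => -(N : ℤ)) (2 * N) σ) := by
  unfold gibbsMeasureN
  exact integral_gibbs _ _ β hf

lemma measurable_plaqSpinB (p : Plaq) : Measurable fun x : Edge → Bool => plaqSpinB x p := by
  have hb : Measurable boolSpin := measurable_from_top
  have h : ∀ e : Edge, Measurable fun x : Edge → Bool => boolSpin (x e) :=
    fun e => hb.comp (measurable_pi_apply e)
  exact (((h _).mul (h _)).mul (h _)).mul (h _)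

lemma continuous_plaqSpinB (p : Plaq) : Continuous fun x : Edge → Bool => plaqSpinB x p := by
  have hb : Continuous boolSpin := continuous_of_discreteTopology
  have h : ∀ e : Edge, Continuous fun x : Edge → Bool => boolSpin (x e) :=
    fun e => hb.comp (continuous_apply e)
  exact (((h _).mul (h _)).mul (h _)).mul (h _)

lemma mem_cubePlaqs_of_le (p : Plaq) (hij : p.2.1 < p.2.2) (N : ℕ)
    (h : ∀ v ∈ plaqVerts p, ∀ m : Fin 4, (v m).natAbs ≤ N) :
    p ∈ cubePlaqs (fun _ => -(N : ℤ)) (2 * N) := by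
  have hcube : ∀ v ∈ plaqVerts p, v ∈ cubeV (fun _ => -(N : ℤ)) (2 * N) := by
    intro v hv
    rw [cubeV, Fintype.mem_piFinset]
    intro m
    have h2 : ((v m).natAbs : ℤ) ≤ (N : ℤ) := by exact_mod_cast h v hv m
    have h3 : |v m| ≤ (N : ℤ) := by rw [Int.abs_eq_natAbs]; exact h2
    obtain ⟨h4, h5⟩ := abs_le.mp h3
    rw [Finset.mem_Icc]
    push_cast
    omega
  rw [cubePlaqs, Finset.mem_filter]
  refine ⟨?_, hij, hcube⟩
  rw [Finset.mem_product]
  constructor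
  · refine hcube p.1 ?_
    rw [plaqVerts]
    exact Finset.mem_insert_self _ _
  · simp [Finset.mem_product]

lemma vert_coord (p : Plaq) (hij : p.2.1 < p.2.2) :
    ∀ v ∈ plaqVerts p, ∀ m : Fin 4, v m = p.1 m ∨ v m = p.1 m + 1 := by
  intro v hv m
  have hne : p.2.1 ≠ p.2.2 := ne_of_lt hij
  rw [plaqVerts] at hv
  simp only [Finset.mem_insert, Finset.mem_singleton] at hv
  rcases hv with h | h | h | h <;> subst h
  · exact Or.inl rfl
  · by_cases h1 : m = p.2.1 <;> simp [unitVec, h1]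
  · by_cases h2 : m = p.2.2 <;> simp [unitVec, h2]
  · by_cases h1 : m = p.2.1 <;> by_cases h2 : m = p.2.2
    · exact absurd (h1.symm.trans h2) hne
    · simp [unitVec, h1, h2, hne, Ne.symm hne]
    · simp [unitVec, h1, h2, hne, Ne.symm hne]
    · simp [unitVec, h1, h2, hne, Ne.symm hne]

end RarityAux
end RarityAux

/-- **Theorem 6.1 (Rarity of negative plaquettes).**
There is `β₀ > 0` such that the following holds whenever `β ≥ β₀`.  Let `μ_β` be any
subsequential weak limit of the finite-volume Ising lattice gauge measures.  For any finite
set `P` of plaquettes of `ℤ⁴` there is a constant `C_P`, depending only on `P`, such that the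
`μ_β`-probability that `σ_p = -1` for all `p ∈ P` is at most `C_P e^{-2β|P|}`. -/
theorem rarity_of_negative_plaquettes :
    ∃ β₀ : ℝ, 0 < β₀ ∧
      ∀ P : Finset Plaq, (∀ p ∈ P, p.2.1 < p.2.2) →
        ∃ CP : ℝ, 0 < CP ∧
          ∀ β : ℝ, β₀ ≤ β →
          ∀ μ : MeasureTheory.Measure (Edge → Bool), IsGibbsLimit β μ →
            (μ {x | ∀ p ∈ P, plaqSpinB x p = -1}).toReal ≤
              CP * Real.exp (-2 * β * (P.card : ℝ)) := by
  refine ⟨1, one_pos, ?_⟩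
  intro P hPlt
  refine ⟨2 ^ P.card, by positivity, ?_⟩
  intro β hβ1 μ hμ
  have hβ : (0 : ℝ) ≤ β := le_trans zero_le_one hβ1
  obtain ⟨hprob, φ, hφ, hconv⟩ := hμ
  classical
  set A : Set (Edge → Bool) := {x | ∀ p ∈ P, plaqSpinB x p = -1} with hA
  set f : (Edge → Bool) → ℝ := fun x => ∏ p ∈ P, (1 - plaqSpinB x p) / 2 with hfdef
  have hmeas : Measurable f := by
    refine Finset.measurable_prod _ fun p _ => ?_
    exact (measurable_const.sub (RarityAux.measurable_plaqSpinB p)).div_const 2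
  have hcont : Continuous f := by
    refine continuous_finset_prod _ fun p _ => ?_
    exact (continuous_const.sub (RarityAux.continuous_plaqSpinB p)).div_const 2
  have hAmeas : MeasurableSet A := by
    have hAeq : A = ⋂ p ∈ P, {x : Edge → Bool | plaqSpinB x p = -1} := by
      ext x; simp [hA]
    rw [hAeq]
    exact MeasurableSet.biInter (Finset.countable_toSet P)
      (fun p _ => (RarityAux.measurable_plaqSpinB p) (measurableSet_singleton (-1)))
  have hind : f = Set.indicator A fun _ => (1 : ℝ) := by
    funext x
    by_cases hx : x ∈ A
    · rw [Set.indicator_of_mem hx]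
      have hx' : ∀ p ∈ P, plaqSpinB x p = -1 := hx
      exact Finset.prod_eq_one fun p hp => by rw [hx' p hp]; norm_num
    · rw [Set.indicator_of_notMem hx]
      simp only [hA, Set.mem_setOf_eq] at hx
      push_neg at hx
      obtain ⟨p, hp, hne⟩ := hx
      exact Finset.prod_eq_zero hp
        (by rw [(RarityAux.plaqSpinB_pm x p).resolve_right hne]; norm_num)
  have hintμ : ∫ x, f x ∂μ = (μ A).toReal := by
    rw [hind, MeasureTheory.integral_indicator_const (1 : ℝ) hAmeas, smul_eq_mul, mul_one]; rfl
  have hlim := hconv f hcont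
  rw [hintμ] at hlim
  refine le_of_tendsto hlim ?_
  rw [Filter.eventually_atTop]
  set K : Plaq → ℕ := fun p => Finset.univ.sup fun m : Fin 4 =>
    max (p.1 m).natAbs (p.1 m + 1).natAbs with hK
  refine ⟨P.sup K, fun k hk => ?_⟩
  set N : ℕ := φ k with hN
  have hNk : P.sup K ≤ N := le_trans hk hφ.le_apply
  have hPsub : P ⊆ cubePlaqs (fun _ => -(N : ℤ)) (2 * N) := by
    intro p hp
    refine RarityAux.mem_cubePlaqs_of_le p (hPlt p hp) N ?_
    intro v hv m
    rcases RarityAux.vert_coord p (hPlt p hp) v hv m with h | h <;> rw [h]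
    · calc (p.1 m).natAbs ≤ max (p.1 m).natAbs (p.1 m + 1).natAbs := le_max_left _ _
        _ ≤ K p := by simp only [hK]; exact Finset.le_sup (f := fun m : Fin 4 => max (p.1 m).natAbs (p.1 m + 1).natAbs) (Finset.mem_univ m)
        _ ≤ P.sup K := Finset.le_sup hp
        _ ≤ N := hNk
    · calc (p.1 m + 1).natAbs ≤ max (p.1 m).natAbs (p.1 m + 1).natAbs := le_max_right _ _
        _ ≤ K p := by simp only [hK]; exact Finset.le_sup (f := fun m : Fin 4 => max (p.1 m).natAbs (p.1 m + 1).natAbs) (Finset.mem_univ m)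
        _ ≤ P.sup K := Finset.le_sup hp
        _ ≤ N := hNk
  rw [RarityAux.integral_gibbsN N β hmeas]
  have hfe : ∀ σ : Config (fun _ => -(N : ℤ)) (2 * N),
      f (extBool (fun _ => -(N : ℤ)) (2 * N) σ) *
          Real.exp (β * energy (fun _ => -(N : ℤ)) (2 * N) σ)
        = (∏ p ∈ P, (1 - plaqSpin (extSpin (fun _ => -(N : ℤ)) (2 * N) σ) p) / 2) *
          Real.exp (β * energy (fun _ => -(N : ℤ)) (2 * N) σ) := by
    intro σ
    congr 1
    rw [hfdef]
    exact Finset.prod_congr rfl fun p _ => by rw [RarityAux.plaqSpinB_extBool]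
  have hNum := RarityAux.finvol (fun _ => -(N : ℤ)) (2 * N) hβ P hPsub
  have hZpos : 0 < ∑ σ : Config (fun _ => -(N : ℤ)) (2 * N),
      Real.exp (β * energy (fun _ => -(N : ℤ)) (2 * N) σ) := by
    have hne : Nonempty (Config (fun _ => -(N : ℤ)) (2 * N)) := ⟨fun _ => true⟩
    exact Finset.sum_pos (fun σ _ => Real.exp_pos _) Finset.univ_nonempty
  calc (∑ σ : Config (fun _ => -(N : ℤ)) (2 * N),
          Real.exp (β * energy (fun _ => -(N : ℤ)) (2 * N) σ))⁻¹ *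
        ∑ σ : Config (fun _ => -(N : ℤ)) (2 * N),
          f (extBool (fun _ => -(N : ℤ)) (2 * N) σ) *
            Real.exp (β * energy (fun _ => -(N : ℤ)) (2 * N) σ)
      ≤ (∑ σ : Config (fun _ => -(N : ℤ)) (2 * N),
            Real.exp (β * energy (fun _ => -(N : ℤ)) (2 * N) σ))⁻¹ *
          (2 ^ P.card * Real.exp (-2 * β * (P.card : ℝ)) *
            ∑ σ : Config (fun _ => -(N : ℤ)) (2 * N),
              Real.exp (β * energy (fun _ => -(N : ℤ)) (2 * N) σ)) := by
        refine mul_le_mul_of_nonneg_left ?_ (inv_nonneg.mpr hZpos.le)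
        rw [Finset.sum_congr rfl fun σ _ => hfe σ]
        exact hNum
    _ = 2 ^ P.card * Real.exp (-2 * β * (P.card : ℝ)) := by
        rw [mul_comm (2 ^ P.card * Real.exp (-2 * β * (P.card : ℝ))) _, ← mul_assoc,
          inv_mul_cancel₀ hZpos.ne', one_mul]
end

section
/- There exists β₀ > 0 such that the following holds whenever β ≥ β₀. Let μ_β be any subsequential weak limit of the finite-volume Ising lattice gauge measures. Then for any plaquette p of ℤ⁴ and any m ≥ 1, the μ_β-probability that p is contained in a vortex of size at least m is at most C_m·e^{−2β·m}, where C_m is a constant depending only on m. -/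
open MeasureTheory

/-!
The dual lattice `*ℤ⁴` is identified with `ℤ⁴`: the dual vertex `y = z + (1/2,1/2,1/2,1/2)`
(the center of the unit 4-cell with base vertex `z`) is identified with the integer point
`z`, and cells of the dual lattice (which span in the negative coordinate directions from
their dual base vertex) are recorded by their lowest corner, so that plaquettes of the dual
lattice are again elements of `Plaq`.
-/

/-- The two directions of `Fin 4` complementary to `{i, j}`. -/
def compl2 (i j : Fin 4) : Finset (Fin 4) := Finset.univ \ {i, j}

lemma compl2_nonempty (i j : Fin 4) : (compl2 i j).Nonempty := by
  have h2 : ({i, j} : Finset (Fin 4)).card ≤ 2 := by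
    refine le_trans (Finset.card_insert_le _ _) ?_
    simp
  rw [compl2, Finset.sdiff_nonempty]
  intro hsub
  have h4 := Finset.card_le_card hsub
  simp [Finset.card_univ] at h4
  omega

/-- The Hodge dual of the plaquette `(x, i, j)` of `ℤ⁴`: the plaquette of the dual lattice
spanned by the two complementary directions `k < l`, which (as an unoriented square, in the
integer coordinates for `*ℤ⁴` described above) has lowest corner `x - e_k - e_l`. -/
def dualPlaq (p : Plaq) : Plaq :=
  let k := (compl2 p.2.1 p.2.2).min' (compl2_nonempty _ _)
  let l := (compl2 p.2.1 p.2.2).max' (compl2_nonempty _ _)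
  (p.1 - unitVec k - unitVec l, k, l)

/-- The boundary of a surface (set of plaquettes): the set of edges contained in an odd
number of plaquettes of the surface. -/
def surfBdry (S : Set Plaq) : Set Edge :=
  {e | Odd {p | p ∈ S ∧ e ∈ plaqEdges p}.ncard}

/-- A surface is closed if its boundary is empty. -/
def SurfClosed (S : Set Plaq) : Prop := surfBdry S = ∅

/-- The dual surface `*S`: the set of Hodge duals of the plaquettes of `S`. -/
def dualSurf (S : Set Plaq) : Set Plaq := dualPlaq '' S

/-- Two plaquettes are adjacent if they share a common edge. -/
def PlaqAdj (p q : Plaq) : Prop := p ≠ q ∧ (plaqEdges p ∩ plaqEdges q).Nonempty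

/-- A surface is connected if it is connected with respect to adjacency of plaquettes. -/
def SurfConnected (S : Set Plaq) : Prop :=
  ∀ p ∈ S, ∀ q ∈ S, Relation.ReflTransGen (fun u v => u ∈ S ∧ v ∈ S ∧ PlaqAdj u v) p q

/-- The set of negative plaquettes of the configuration `x` (those with `σ_p = -1`). -/
noncomputable def negPlaqs (x : Edge → Bool) : Set Plaq :=
  {p | p.2.1 < p.2.2 ∧ plaqSpin (fun e => boolSpin (x e)) p = -1}

/-- A vortex of the configuration `x`: a nonempty surface all of whose plaquettes are
negative plaquettes of `x`, such that the dual surface is closed and connected. -/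
noncomputable def IsVortex (x : Edge → Bool) (S : Set Plaq) : Prop :=
  S.Nonempty ∧ (∀ p ∈ S, p ∈ negPlaqs x) ∧
    SurfClosed (dualSurf S) ∧ SurfConnected (dualSurf S)


/-! ### Part 1: spin basics and Griffiths' first inequality -/

lemma boolSpin_pm (b : Bool) : boolSpin b = 1 ∨ boolSpin b = -1 := by
  cases b <;> simp [boolSpin]

lemma extSpin_pm (a : V4) (w : ℕ) (σ : Config a w) (e : Edge) :
    extSpin a w σ e = 1 ∨ extSpin a w σ e = -1 := by
  unfold extSpin
  split
  · exact boolSpin_pm _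
  · left; rfl

lemma plaqSpin_pm (f : Edge → ℝ) (hf : ∀ e, f e = 1 ∨ f e = -1) (p : Plaq) :
    plaqSpin f p = 1 ∨ plaqSpin f p = -1 := by
  unfold plaqSpin
  rcases hf (p.1, p.2.1) with h1 | h1 <;> rcases hf (p.1, p.2.2) with h2 | h2 <;>
    rcases hf (p.1 + unitVec p.2.1, p.2.2) with h3 | h3 <;>
    rcases hf (p.1 + unitVec p.2.2, p.2.1) with h4 | h4 <;>
    rw [h1, h2, h3, h4] <;> norm_num

/-- The four edges of a plaquette as a multiset (with multiplicity, in order). -/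
def edgesM (p : Plaq) : Multiset Edge :=
  {(p.1, p.2.1), (p.1, p.2.2), (p.1 + unitVec p.2.1, p.2.2), (p.1 + unitVec p.2.2, p.2.1)}

lemma plaqSpin_eq_prod (f : Edge → ℝ) (p : Plaq) :
    plaqSpin f p = ((edgesM p).map f).prod := by
  simp [plaqSpin, edgesM]
  ring

/-- Core positivity: the sum over all configurations of a product of spins is nonnegative. -/
lemma core_nonneg (a : V4) (w : ℕ) (L : Multiset Edge) :
    0 ≤ ∑ σ : Config a w, ((L.map (extSpin a w σ)).prod) := by
  classical
  have key : ∀ σ : Config a w,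
      (L.map (extSpin a w σ)).prod
        = ∏ e : {e : Edge // e ∈ cubeEdges a w}, (boolSpin (σ e)) ^ (L.count (e : Edge)) := by
    intro σ
    set F : Edge → ℝ :=
      fun e => if h : e ∈ cubeEdges a w then (boolSpin (σ ⟨e, h⟩)) ^ (L.count e) else 1 with hF
    have h1 : (L.map (extSpin a w σ)).prod
        = ∏ e ∈ L.toFinset, (extSpin a w σ e) ^ (L.count e) :=
      Finset.prod_multiset_map_count L (extSpin a w σ)
    have hFval : ∀ e, (extSpin a w σ e) ^ (L.count e) = F e := by
      intro e
      by_cases h : e ∈ cubeEdges a w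
      · simp only [hF, dif_pos h]; unfold extSpin; rw [dif_pos h]
      · simp only [hF, dif_neg h]; unfold extSpin; rw [dif_neg h]; exact one_pow _
    have hL : (L.map (extSpin a w σ)).prod = ∏ e ∈ L.toFinset ∪ cubeEdges a w, F e := by
      rw [h1, Finset.prod_congr rfl (fun e _ => hFval e)]
      refine Finset.prod_subset Finset.subset_union_left ?_
      intro e _ he
      have h0 : L.count e = 0 := by
        rwa [Multiset.count_eq_zero, ← Multiset.mem_toFinset]
      simp only [hF, h0, pow_zero]
      split <;> rfl
    have hR : (∏ e : {e : Edge // e ∈ cubeEdges a w}, (boolSpin (σ e)) ^ (L.count (e : Edge)))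
        = ∏ e ∈ L.toFinset ∪ cubeEdges a w, F e := by
      have h2 : (∏ e : {e : Edge // e ∈ cubeEdges a w}, (boolSpin (σ e)) ^ (L.count (e : Edge)))
          = ∏ e ∈ (cubeEdges a w).attach, F (e : Edge) := by
        rw [Finset.univ_eq_attach]
        refine Finset.prod_congr rfl ?_
        intro e _
        simp only [hF, dif_pos e.2]
      rw [h2, Finset.prod_attach (cubeEdges a w) F]
      refine Finset.prod_subset Finset.subset_union_right ?_
      intro e _ he
      simp only [hF, dif_neg he]
    rw [hL, hR]
  rw [Finset.sum_congr rfl (fun σ _ => key σ)]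
  have hfact : (∑ σ : Config a w,
      ∏ e : {e : Edge // e ∈ cubeEdges a w}, (boolSpin (σ e)) ^ (L.count (e : Edge)))
      = ∏ e : {e : Edge // e ∈ cubeEdges a w}, (∑ b : Bool, (boolSpin b) ^ (L.count (e : Edge))) := by
    rw [Finset.prod_univ_sum]
    rw [Fintype.piFinset_univ]
  rw [hfact]
  refine Finset.prod_nonneg ?_
  intro e _
  have : (∑ b : Bool, (boolSpin b) ^ (L.count (e : Edge)))
      = 1 + (-1 : ℝ) ^ (L.count (e : Edge)) := by
    simp [boolSpin, Fintype.sum_bool]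
  rw [this]
  rcases Nat.even_or_odd (L.count (e : Edge)) with h | h
  · rw [h.neg_one_pow]; norm_num
  · rw [h.neg_one_pow]; norm_num

/-- Product of plaquette spins over a finset, as a multiset-product of edge spins. -/
lemma prod_plaqSpin_eq (f : Edge → ℝ) (B : Finset Plaq) :
    ∏ q ∈ B, plaqSpin f q = ((B.val.bind edgesM).map f).prod := by
  rw [Multiset.map_bind, Multiset.prod_bind]
  rw [Finset.prod_eq_multiset_prod]
  refine congrArg Multiset.prod (Multiset.map_congr rfl ?_)
  intro q _
  exact plaqSpin_eq_prod f q

/-- Griffiths' first inequality, in the form needed here. -/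
lemma griffiths (a : V4) (w : ℕ) (β : ℝ) (hβ : 0 ≤ β) (L : Multiset Edge) (Q : Finset Plaq) :
    0 ≤ ∑ σ : Config a w,
      ((L.map (extSpin a w σ)).prod) *
        Real.exp (β * ∑ q ∈ Q, plaqSpin (extSpin a w σ) q) := by
  classical
  have hexp : ∀ σ : Config a w,
      Real.exp (β * ∑ q ∈ Q, plaqSpin (extSpin a w σ) q)
        = ∏ q ∈ Q, (Real.cosh β + plaqSpin (extSpin a w σ) q * Real.sinh β) := by
    intro σ
    rw [Finset.mul_sum, Real.exp_sum]
    refine Finset.prod_congr rfl ?_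
    intro q _
    rcases plaqSpin_pm _ (extSpin_pm a w σ) q with h | h <;> rw [h]
    · rw [mul_one, one_mul, Real.cosh_add_sinh]
    · rw [neg_one_mul, mul_neg_one, ← Real.cosh_sub_sinh]
      ring_nf
  have hprod : ∀ σ : Config a w,
      (∏ q ∈ Q, (Real.cosh β + plaqSpin (extSpin a w σ) q * Real.sinh β))
        = ∑ B ∈ Q.powerset,
            (Real.cosh β) ^ B.card * (Real.sinh β) ^ (Q \ B).card *
              ((((Q \ B).val.bind edgesM).map (extSpin a w σ)).prod) := by
    intro σ
    rw [Finset.prod_add]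
    refine Finset.sum_congr rfl ?_
    intro B hB
    rw [Finset.prod_const, Finset.prod_mul_distrib, Finset.prod_const]
    rw [prod_plaqSpin_eq]
    ring
  have hswap : (∑ σ : Config a w,
      ((L.map (extSpin a w σ)).prod) *
        Real.exp (β * ∑ q ∈ Q, plaqSpin (extSpin a w σ) q))
      = ∑ B ∈ Q.powerset,
          (Real.cosh β) ^ B.card * (Real.sinh β) ^ (Q \ B).card *
            (∑ σ : Config a w, (((L + (Q \ B).val.bind edgesM).map (extSpin a w σ)).prod)) := by
    rw [Finset.sum_congr rfl (fun σ _ => by rw [hexp σ, hprod σ, Finset.mul_sum])]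
    rw [Finset.sum_comm]
    refine Finset.sum_congr rfl ?_
    intro B hB
    rw [Finset.mul_sum]
    refine Finset.sum_congr rfl ?_
    intro σ _
    rw [Multiset.map_add, Multiset.prod_add]
    ring
  rw [hswap]
  refine Finset.sum_nonneg ?_
  intro B hB
  refine mul_nonneg (mul_nonneg ?_ ?_) ?_
  · exact pow_nonneg (Real.cosh_pos _).le _
  · refine pow_nonneg ?_ _
    rw [← Real.sinh_zero]
    exact Real.sinh_le_sinh.2 hβ
  · exact core_nonneg a w _

/-! ### Part 3: the finite-volume Peierls-type bound -/

lemma iP_mem01 (a : V4) (w : ℕ) (T : Finset Plaq) (σ : Config a w) :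
    0 ≤ (∏ q ∈ T, (1 + plaqSpin (extSpin a w σ) q) / 2) ∧
      (∏ q ∈ T, (1 + plaqSpin (extSpin a w σ) q) / 2) ≤ 1 := by
  constructor
  · refine Finset.prod_nonneg ?_
    intro q _
    rcases plaqSpin_pm _ (extSpin_pm a w σ) q with h | h <;> rw [h] <;> norm_num
  · refine Finset.prod_le_one ?_ ?_ <;> intro q _ <;>
      rcases plaqSpin_pm _ (extSpin_pm a w σ) q with h | h <;> rw [h] <;> norm_num

lemma griffiths_comparison (a : V4) (w : ℕ) (β : ℝ) (hβ : 0 ≤ β) (T Q : Finset Plaq) :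
    (∑ σ : Config a w, (∏ q ∈ T, (1 - plaqSpin (extSpin a w σ) q) / 2) *
        Real.exp (β * ∑ q ∈ Q, plaqSpin (extSpin a w σ) q))
      ≤ ∑ σ : Config a w, (∏ q ∈ T, (1 + plaqSpin (extSpin a w σ) q) / 2) *
        Real.exp (β * ∑ q ∈ Q, plaqSpin (extSpin a w σ) q) := by
  classical
  rw [← sub_nonneg, ← Finset.sum_sub_distrib]
  have hdiff : ∀ σ : Config a w,
      (∏ q ∈ T, (1 + plaqSpin (extSpin a w σ) q) / 2) *
          Real.exp (β * ∑ q ∈ Q, plaqSpin (extSpin a w σ) q) -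
        (∏ q ∈ T, (1 - plaqSpin (extSpin a w σ) q) / 2) *
          Real.exp (β * ∑ q ∈ Q, plaqSpin (extSpin a w σ) q)
      = ∑ B ∈ T.powerset,
          ((1 - (-1 : ℝ) ^ B.card) * (1/2) ^ B.card * (1/2) ^ (T \ B).card) *
            ((∏ q ∈ B, plaqSpin (extSpin a w σ) q) *
              Real.exp (β * ∑ q ∈ Q, plaqSpin (extSpin a w σ) q)) := by
    intro σ
    have hplus : (∏ q ∈ T, (1 + plaqSpin (extSpin a w σ) q) / 2)
        = ∑ B ∈ T.powerset, ((1/2) ^ B.card * (1/2) ^ (T \ B).card) *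
            (∏ q ∈ B, plaqSpin (extSpin a w σ) q) := by
      have h := Finset.prod_add (fun q => plaqSpin (extSpin a w σ) q * (1/2 : ℝ))
        (fun _ => (1/2 : ℝ)) T
      rw [Finset.prod_congr rfl (fun q _ => by ring :
        ∀ q ∈ T, (1 + plaqSpin (extSpin a w σ) q) / 2
          = plaqSpin (extSpin a w σ) q * (1/2 : ℝ) + (1/2 : ℝ))] at *
      rw [h]
      refine Finset.sum_congr rfl ?_
      intro B hB
      rw [Finset.prod_mul_distrib, Finset.prod_const, Finset.prod_const]
      ring
    have hminus : (∏ q ∈ T, (1 - plaqSpin (extSpin a w σ) q) / 2)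
        = ∑ B ∈ T.powerset, ((-1 : ℝ) ^ B.card * (1/2) ^ B.card * (1/2) ^ (T \ B).card) *
            (∏ q ∈ B, plaqSpin (extSpin a w σ) q) := by
      have h := Finset.prod_add (fun q => -plaqSpin (extSpin a w σ) q * (1/2 : ℝ))
        (fun _ => (1/2 : ℝ)) T
      rw [Finset.prod_congr rfl (fun q _ => by ring :
        ∀ q ∈ T, (1 - plaqSpin (extSpin a w σ) q) / 2
          = -plaqSpin (extSpin a w σ) q * (1/2 : ℝ) + (1/2 : ℝ))] at *
      rw [h]
      refine Finset.sum_congr rfl ?_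
      intro B hB
      rw [Finset.prod_mul_distrib, Finset.prod_const, Finset.prod_const]
      have : (∏ x ∈ B, -plaqSpin (extSpin a w σ) x)
          = (-1 : ℝ) ^ B.card * ∏ q ∈ B, plaqSpin (extSpin a w σ) q := by
        rw [← Finset.prod_const, ← Finset.prod_mul_distrib]
        exact Finset.prod_congr rfl (fun q _ => by ring)
      rw [this]
      ring
    rw [hplus, hminus, Finset.sum_mul, Finset.sum_mul, ← Finset.sum_sub_distrib]
    refine Finset.sum_congr rfl ?_
    intro B hB
    ring
  rw [Finset.sum_congr rfl (fun σ _ => hdiff σ), Finset.sum_comm]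
  refine Finset.sum_nonneg ?_
  intro B hB
  rw [← Finset.mul_sum]
  refine mul_nonneg ?_ ?_
  · rcases Nat.even_or_odd B.card with h | h <;>
      rw [h.neg_one_pow] <;> positivity
  · have hg := griffiths a w β hβ (B.val.bind edgesM) Q
    refine le_trans hg (le_of_eq ?_)
    refine Finset.sum_congr rfl ?_
    intro σ _
    rw [prod_plaqSpin_eq]

-- The finite-volume Peierls bound.
set_option maxHeartbeats 1000000 in
lemma finite_bound (a : V4) (w : ℕ) (β : ℝ) (hβ : 0 ≤ β) (T : Finset Plaq)
    (hT : T ⊆ cubePlaqs a w) :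
    (∑ σ : Config a w, (∏ q ∈ T, (1 - plaqSpin (extSpin a w σ) q) / 2) *
        Real.exp (β * energy a w σ))
      ≤ Real.exp (-2 * β * T.card) * ∑ σ : Config a w, Real.exp (β * energy a w σ) := by
  classical
  set G : Config a w → ℝ :=
    fun σ => Real.exp (β * ∑ q ∈ cubePlaqs a w \ T, plaqSpin (extSpin a w σ) q) with hG
  -- pointwise rewriting of the weights on the support of the indicators
  have hA : ∀ σ : Config a w,
      (∏ q ∈ T, (1 - plaqSpin (extSpin a w σ) q) / 2) * Real.exp (β * energy a w σ)
        = Real.exp (-β * T.card) *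
            ((∏ q ∈ T, (1 - plaqSpin (extSpin a w σ) q) / 2) * G σ) := by
    intro σ
    by_cases hall : ∀ q ∈ T, plaqSpin (extSpin a w σ) q = -1
    · have hsum : energy a w σ
          = (∑ q ∈ cubePlaqs a w \ T, plaqSpin (extSpin a w σ) q) + (- T.card : ℝ) := by
        unfold energy
        rw [← Finset.sum_sdiff hT]
        congr 1
        rw [Finset.sum_congr rfl hall, Finset.sum_const]
        simp
      rw [hsum, hG, mul_add, Real.exp_add,
        show β * (-(T.card : ℝ)) = -β * T.card by ring]
      ring
    · push_neg at hall
      obtain ⟨q, hq, hne⟩ := hall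
      have h1 : plaqSpin (extSpin a w σ) q = 1 := by
        rcases plaqSpin_pm _ (extSpin_pm a w σ) q with h | h
        · exact h
        · exact absurd h hne
      have hz : (∏ q ∈ T, (1 - plaqSpin (extSpin a w σ) q) / 2) = 0 := by
        refine Finset.prod_eq_zero hq ?_
        rw [h1]; norm_num
      rw [hz]; ring
  have hP : ∀ σ : Config a w,
      (∏ q ∈ T, (1 + plaqSpin (extSpin a w σ) q) / 2) * G σ
        = Real.exp (-β * T.card) *
            ((∏ q ∈ T, (1 + plaqSpin (extSpin a w σ) q) / 2) * Real.exp (β * energy a w σ)) := by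
    intro σ
    by_cases hall : ∀ q ∈ T, plaqSpin (extSpin a w σ) q = 1
    · have hsum : energy a w σ
          = (∑ q ∈ cubePlaqs a w \ T, plaqSpin (extSpin a w σ) q) + (T.card : ℝ) := by
        unfold energy
        rw [← Finset.sum_sdiff hT]
        congr 1
        rw [Finset.sum_congr rfl hall, Finset.sum_const]
        simp
      rw [hsum, hG, mul_add, Real.exp_add,
        show β * ((T.card : ℝ)) = -(-β * T.card) by ring, Real.exp_neg]
      rw [eq_comm, mul_comm, mul_assoc, mul_assoc]
      rw [inv_mul_cancel₀ (Real.exp_ne_zero _)]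
      ring
    · push_neg at hall
      obtain ⟨q, hq, hne⟩ := hall
      have h1 : plaqSpin (extSpin a w σ) q = -1 := by
        rcases plaqSpin_pm _ (extSpin_pm a w σ) q with h | h
        · exact absurd h hne
        · exact h
      have hz : (∏ q ∈ T, (1 + plaqSpin (extSpin a w σ) q) / 2) = 0 := by
        refine Finset.prod_eq_zero hq ?_
        rw [h1]; norm_num
      rw [hz]; ring
  calc (∑ σ : Config a w, (∏ q ∈ T, (1 - plaqSpin (extSpin a w σ) q) / 2) *
          Real.exp (β * energy a w σ))
      = Real.exp (-β * T.card) *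
          ∑ σ : Config a w, (∏ q ∈ T, (1 - plaqSpin (extSpin a w σ) q) / 2) * G σ := by
        rw [Finset.mul_sum]
        exact Finset.sum_congr rfl (fun σ _ => hA σ)
    _ ≤ Real.exp (-β * T.card) *
          ∑ σ : Config a w, (∏ q ∈ T, (1 + plaqSpin (extSpin a w σ) q) / 2) * G σ := by
        refine mul_le_mul_of_nonneg_left ?_ (Real.exp_nonneg _)
        exact griffiths_comparison a w β hβ T (cubePlaqs a w \ T)
    _ = Real.exp (-β * T.card) * (Real.exp (-β * T.card) *
          ∑ σ : Config a w, (∏ q ∈ T, (1 + plaqSpin (extSpin a w σ) q) / 2) *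
            Real.exp (β * energy a w σ)) := by
        have hstep : (∑ σ : Config a w, (∏ q ∈ T, (1 + plaqSpin (extSpin a w σ) q) / 2) * G σ)
            = Real.exp (-β * T.card) *
                ∑ σ : Config a w, (∏ q ∈ T, (1 + plaqSpin (extSpin a w σ) q) / 2) *
                  Real.exp (β * energy a w σ) := by
          rw [Finset.mul_sum]
          exact Finset.sum_congr rfl (fun σ _ => hP σ)
        rw [hstep]
    _ ≤ Real.exp (-β * T.card) * (Real.exp (-β * T.card) *
          ∑ σ : Config a w, Real.exp (β * energy a w σ)) := by
        refine mul_le_mul_of_nonneg_left (mul_le_mul_of_nonneg_left ?_ (Real.exp_nonneg _))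
          (Real.exp_nonneg _)
        refine Finset.sum_le_sum ?_
        intro σ _
        have h01 := iP_mem01 a w T σ
        nlinarith [Real.exp_nonneg (β * energy a w σ)]
    _ = Real.exp (-2 * β * T.card) * ∑ σ : Config a w, Real.exp (β * energy a w σ) := by
        rw [← mul_assoc, ← Real.exp_add,
          show -β * (T.card : ℝ) + -β * T.card = -2 * β * T.card by ring]

/-! ### Part 5: measure computations -/

open MeasureTheory
open scoped ENNReal

lemma boolSpin_extBool (a : V4) (w : ℕ) (σ : Config a w) :
    (fun e => boolSpin (extBool a w σ e)) = extSpin a w σ := by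
  funext e
  unfold extBool extSpin
  split <;> rfl

lemma plaqSpinB_extBool (a : V4) (w : ℕ) (σ : Config a w) (q : Plaq) :
    plaqSpinB (extBool a w σ) q = plaqSpin (extSpin a w σ) q := by
  unfold plaqSpinB
  rw [boolSpin_extBool]

/-- The event that all plaquettes of `T` are negative. -/
def negSet (T : Finset Plaq) : Set (Edge → Bool) := {x | ∀ q ∈ T, plaqSpinB x q = -1}

lemma measurable_boolSpin_apply (e : Edge) :
    Measurable (fun x : Edge → Bool => boolSpin (x e)) :=
  (Measurable.of_discrete (f := boolSpin)).comp (measurable_pi_apply e)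

lemma measurable_plaqSpinB (q : Plaq) :
    Measurable (fun x : Edge → Bool => plaqSpinB x q) := by
  unfold plaqSpinB plaqSpin
  exact (((measurable_boolSpin_apply _).mul (measurable_boolSpin_apply _)).mul
    (measurable_boolSpin_apply _)).mul (measurable_boolSpin_apply _)

lemma measurableSet_negSet (T : Finset Plaq) : MeasurableSet (negSet T) := by
  have : negSet T = ⋂ q ∈ T, {x : Edge → Bool | plaqSpinB x q = -1} := by
    ext x; simp [negSet]
  rw [this]
  exact MeasurableSet.biInter (Finset.countable_toSet T)
    (fun q _ => (measurable_plaqSpinB q) (measurableSet_singleton (-1)))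

lemma continuous_plaqSpinB (q : Plaq) :
    Continuous (fun x : Edge → Bool => plaqSpinB x q) := by
  unfold plaqSpinB plaqSpin
  have h : ∀ e : Edge, Continuous (fun x : Edge → Bool => boolSpin (x e)) := by
    intro e
    exact Continuous.comp (continuous_of_discreteTopology (f := boolSpin)) (continuous_apply e)
  exact (((h _).mul (h _)).mul (h _)).mul (h _)

set_option maxHeartbeats 2000000 in
lemma gibbsMeasureN_apply (N : ℕ) (β : ℝ) (A : Set (Edge → Bool)) (hA : MeasurableSet A) :
    gibbsMeasureN N β A
      = (∑ σ : Config (fun _ => -(N : ℤ)) (2 * N),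
          ENNReal.ofReal (Real.exp (β * energy (fun _ => -(N : ℤ)) (2 * N) σ)))⁻¹ *
        ∑ σ : Config (fun _ => -(N : ℤ)) (2 * N),
          ENNReal.ofReal (Real.exp (β * energy (fun _ => -(N : ℤ)) (2 * N) σ)) *
            A.indicator 1 (extBool (fun _ => -(N : ℤ)) (2 * N) σ) := by
  unfold gibbsMeasureN
  rw [Measure.smul_apply]
  rw [Measure.coe_finset_sum]
  rw [Finset.sum_apply]
  rw [smul_eq_mul]
  congr 1
  refine Finset.sum_congr rfl ?_
  intro σ _
  rw [Measure.smul_apply, Measure.dirac_apply' _ hA, smul_eq_mul]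

set_option maxHeartbeats 2000000 in
lemma gibbsMeasureN_bound (N : ℕ) (β : ℝ) (hβ : 0 ≤ β) (T : Finset Plaq)
    (hT : T ⊆ cubePlaqs (fun _ => -(N : ℤ)) (2 * N)) :
    gibbsMeasureN N β (negSet T) ≤ ENNReal.ofReal (Real.exp (-2 * β * T.card)) := by
  classical
  set a : V4 := fun _ => -(N : ℤ) with ha
  set w : ℕ := 2 * N with hw
  rw [gibbsMeasureN_apply N β (negSet T) (measurableSet_negSet T)]
  set Z : ℝ≥0∞ := ∑ σ : Config a w, ENNReal.ofReal (Real.exp (β * energy a w σ)) with hZ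
  have hterm : ∀ σ : Config a w,
      ENNReal.ofReal (Real.exp (β * energy a w σ)) * (negSet T).indicator 1 (extBool a w σ)
        = ENNReal.ofReal ((∏ q ∈ T, (1 - plaqSpin (extSpin a w σ) q) / 2) *
            Real.exp (β * energy a w σ)) := by
    intro σ
    by_cases hmem : extBool a w σ ∈ negSet T
    · have hall : ∀ q ∈ T, plaqSpin (extSpin a w σ) q = -1 := by
        intro q hq
        rw [← plaqSpinB_extBool]
        exact hmem q hq
      have hprod : (∏ q ∈ T, (1 - plaqSpin (extSpin a w σ) q) / 2) = 1 := by
        refine Finset.prod_eq_one ?_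
        intro q hq
        rw [hall q hq]; norm_num
      rw [Set.indicator_of_mem hmem, hprod, one_mul, Pi.one_apply, mul_one]
    · have hnall : ¬ (∀ q ∈ T, plaqSpin (extSpin a w σ) q = -1) := by
        intro hc
        exact hmem (fun q hq => by rw [plaqSpinB_extBool]; exact hc q hq)
      push_neg at hnall
      obtain ⟨q, hq, hne⟩ := hnall
      have h1 : plaqSpin (extSpin a w σ) q = 1 := by
        rcases plaqSpin_pm _ (extSpin_pm a w σ) q with h | h
        · exact h
        · exact absurd h hne
      have hprod : (∏ q ∈ T, (1 - plaqSpin (extSpin a w σ) q) / 2) = 0 :=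
        Finset.prod_eq_zero hq (by rw [h1]; norm_num)
      rw [Set.indicator_of_notMem hmem, hprod, zero_mul, mul_zero, ENNReal.ofReal_zero]
  rw [Finset.sum_congr rfl (fun σ _ => hterm σ)]
  have hnonneg : ∀ σ : Config a w,
      0 ≤ (∏ q ∈ T, (1 - plaqSpin (extSpin a w σ) q) / 2) * Real.exp (β * energy a w σ) := by
    intro σ
    refine mul_nonneg (Finset.prod_nonneg ?_) (Real.exp_nonneg _)
    intro q _
    rcases plaqSpin_pm _ (extSpin_pm a w σ) q with h | h <;> rw [h] <;> norm_num
  rw [← ENNReal.ofReal_sum_of_nonneg (fun σ _ => hnonneg σ)]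
  have hZr : Z = ENNReal.ofReal (∑ σ : Config a w, Real.exp (β * energy a w σ)) := by
    rw [hZ, ← ENNReal.ofReal_sum_of_nonneg (fun σ _ => Real.exp_nonneg _)]
  have hbound := finite_bound a w β hβ T hT
  have hnum : ENNReal.ofReal (∑ σ : Config a w,
        (∏ q ∈ T, (1 - plaqSpin (extSpin a w σ) q) / 2) * Real.exp (β * energy a w σ))
      ≤ ENNReal.ofReal (Real.exp (-2 * β * T.card)) * Z := by
    rw [hZr, ← ENNReal.ofReal_mul (Real.exp_nonneg _)]
    exact ENNReal.ofReal_le_ofReal hbound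
  have hZ0 : Z ≠ 0 := by
    rw [hZ]
    intro hzero
    rw [Finset.sum_eq_zero_iff] at hzero
    have hne : (Finset.univ : Finset (Config a w)).Nonempty := Finset.univ_nonempty
    obtain ⟨σ, hσ⟩ := hne
    have := hzero σ hσ
    rw [ENNReal.ofReal_eq_zero] at this
    exact absurd this (not_le.2 (Real.exp_pos _))
  have hZtop : Z ≠ ⊤ := by
    rw [hZ]
    exact (ENNReal.sum_lt_top.2 (fun _ _ => ENNReal.ofReal_lt_top)).ne
  calc Z⁻¹ * ENNReal.ofReal (∑ σ : Config a w,
        (∏ q ∈ T, (1 - plaqSpin (extSpin a w σ) q) / 2) * Real.exp (β * energy a w σ))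
      ≤ Z⁻¹ * (ENNReal.ofReal (Real.exp (-2 * β * T.card)) * Z) :=
        mul_le_mul_right hnum _
    _ = ENNReal.ofReal (Real.exp (-2 * β * T.card)) := by
        rw [mul_comm (ENNReal.ofReal _) Z, ← mul_assoc, ENNReal.inv_mul_cancel hZ0 hZtop,
          one_mul]

/-! ### Part 7: transfer to the limit measure -/

lemma plaqSpinB_pm (x : Edge → Bool) (q : Plaq) : plaqSpinB x q = 1 ∨ plaqSpinB x q = -1 :=
  plaqSpin_pm _ (fun e => boolSpin_pm (x e)) q

lemma subset_cubePlaqs (T : Finset Plaq) (hij : ∀ q ∈ T, q.2.1 < q.2.2) :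
    ∃ N₀ : ℕ, ∀ N : ℕ, N₀ ≤ N → T ⊆ cubePlaqs (fun _ => -(N : ℤ)) (2 * N) := by
  classical
  set M : ℕ := (T.sup fun q => Finset.univ.sup fun i => (q.1 i).natAbs) + 2 with hM
  refine ⟨M, ?_⟩
  intro N hN q hq
  have hcoord : ∀ i : Fin 4, (q.1 i).natAbs + 2 ≤ N := by
    intro i
    have h1 : (q.1 i).natAbs ≤ Finset.univ.sup fun i => (q.1 i).natAbs :=
      Finset.le_sup (f := fun i => (q.1 i).natAbs) (Finset.mem_univ i)
    have h2 : (Finset.univ.sup fun i => (q.1 i).natAbs)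
        ≤ T.sup fun q => Finset.univ.sup fun i => (q.1 i).natAbs :=
      Finset.le_sup (f := fun q : Plaq => Finset.univ.sup fun i => (q.1 i).natAbs) hq
    omega
  have hvert : ∀ v ∈ plaqVerts q, v ∈ cubeV (fun _ => -(N : ℤ)) (2 * N) := by
    intro v hv
    have hvb : ∀ i : Fin 4, q.1 i ≤ v i ∧ v i ≤ q.1 i + 2 := by
      intro i
      simp only [plaqVerts, Finset.mem_insert, Finset.mem_singleton] at hv
      rcases hv with rfl | rfl | rfl | rfl <;> constructor <;>
        (try simp only [Pi.add_apply, unitVec]) <;>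
        (try split_ifs) <;> omega
    rw [cubeV, Fintype.mem_piFinset]
    intro i
    rw [Finset.mem_Icc]
    have h1 := hvb i
    have h2 := hcoord i
    have h3 : ((q.1 i).natAbs : ℤ) = |q.1 i| := Int.abs_eq_natAbs (q.1 i) |>.symm
    have h4 : ((q.1 i).natAbs : ℤ) + 2 ≤ (N : ℤ) := by exact_mod_cast h2
    constructor
    · have := abs_nonneg (q.1 i)
      have h5 : -(N : ℤ) ≤ q.1 i := by
        have := neg_abs_le (q.1 i)
        omega
      omega
    · have h6 : q.1 i ≤ |q.1 i| := le_abs_self _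
      push_cast
      omega
  rw [cubePlaqs, Finset.mem_filter]
  refine ⟨?_, hij q hq, hvert⟩
  rw [Finset.mem_product]
  constructor
  · exact hvert q.1 (Finset.mem_insert_self _ _)
  · rw [Finset.mem_product]
    exact ⟨Finset.mem_univ _, Finset.mem_univ _⟩

set_option maxHeartbeats 1000000 in
lemma mu_bound (β : ℝ) (hβ : 0 ≤ β) (μ : Measure (Edge → Bool)) (hμ : IsGibbsLimit β μ)
    (T : Finset Plaq) (hij : ∀ q ∈ T, q.2.1 < q.2.2) :
    μ (negSet T) ≤ ENNReal.ofReal (Real.exp (-2 * β * T.card)) := by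
  classical
  obtain ⟨hprob, φ, hmono, hlim⟩ := hμ
  haveI := hprob
  set f : (Edge → Bool) → ℝ := fun x => ∏ q ∈ T, (1 - plaqSpinB x q) / 2 with hf
  have hcont : Continuous f := by
    rw [hf]
    refine continuous_finset_prod _ ?_
    intro q _
    exact (continuous_const.sub (continuous_plaqSpinB q)).div_const 2
  have hfind : f = (negSet T).indicator 1 := by
    funext x
    by_cases hmem : x ∈ negSet T
    · rw [Set.indicator_of_mem hmem, hf, Pi.one_apply]
      refine Finset.prod_eq_one ?_
      intro q hq
      rw [hmem q hq]; norm_num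
    · rw [Set.indicator_of_notMem hmem, hf]
      have : ¬ (∀ q ∈ T, plaqSpinB x q = -1) := hmem
      push_neg at this
      obtain ⟨q, hq, hne⟩ := this
      have h1 : plaqSpinB x q = 1 := by
        rcases plaqSpinB_pm x q with h | h
        · exact h
        · exact absurd h hne
      exact Finset.prod_eq_zero hq (by rw [h1]; norm_num)
  have hint : ∀ ν : Measure (Edge → Bool), ∫ x, f x ∂ν = (ν (negSet T)).toReal := by
    intro ν
    rw [hfind]
    exact integral_indicator_one (measurableSet_negSet T)
  obtain ⟨N₀, hN₀⟩ := subset_cubePlaqs T hij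
  have hev : ∀ᶠ k in Filter.atTop, (fun k => ∫ x, f x ∂gibbsMeasureN (φ k) β) k
      ≤ Real.exp (-2 * β * T.card) := by
    rw [Filter.eventually_atTop]
    refine ⟨N₀, ?_⟩
    intro k hk
    have hφk : N₀ ≤ φ k := le_trans hk (hmono.le_apply)
    have hb : (fun k => ∫ x, f x ∂gibbsMeasureN (φ k) β) k
        = ((gibbsMeasureN (φ k) β) (negSet T)).toReal := hint _
    rw [hb]
    refine ENNReal.toReal_le_of_le_ofReal (Real.exp_nonneg _) ?_
    exact gibbsMeasureN_bound (φ k) β hβ T (hN₀ (φ k) hφk)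
  have hles : (μ (negSet T)).toReal ≤ Real.exp (-2 * β * T.card) := by
    have := hlim f hcont
    rw [hint μ] at this
    exact le_of_tendsto this hev
  rw [← ENNReal.ofReal_toReal (measure_ne_top μ (negSet T))]
  exact ENNReal.ofReal_le_ofReal hles

/-! ### Part 8: combinatorics of vortices -/

/-- Two plaquettes are "dual-adjacent" if their Hodge duals share an edge. -/
def DAdj (q r : Plaq) : Prop := PlaqAdj (dualPlaq q) (dualPlaq r)

lemma compl2_card (i j : Fin 4) (hij : i < j) : (compl2 i j).card = 2 := by
  revert hij
  revert i j
  decide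

lemma dualPlaq_dirs (p : Plaq) :
    (dualPlaq p).2.1 = (compl2 p.2.1 p.2.2).min' (compl2_nonempty _ _) ∧
    (dualPlaq p).2.2 = (compl2 p.2.1 p.2.2).max' (compl2_nonempty _ _) := ⟨rfl, rfl⟩

lemma dualPlaq_injOn {p q : Plaq} (hp : p.2.1 < p.2.2) (hq : q.2.1 < q.2.2)
    (h : dualPlaq p = dualPlaq q) : p = q := by
  have hdir : ∀ i j i' j' : Fin 4, i < j → i' < j' →
      (compl2 i j).min' (compl2_nonempty i j) = (compl2 i' j').min' (compl2_nonempty i' j') →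
      (compl2 i j).max' (compl2_nonempty i j) = (compl2 i' j').max' (compl2_nonempty i' j') →
      i = i' ∧ j = j' := by decide
  have h1 : (dualPlaq p).2.1 = (dualPlaq q).2.1 := by rw [h]
  have h2 : (dualPlaq p).2.2 = (dualPlaq q).2.2 := by rw [h]
  obtain ⟨hi, hj⟩ := hdir p.2.1 p.2.2 q.2.1 q.2.2 hp hq h1 h2
  have hbase : p.1 = q.1 := by
    have h0 : (dualPlaq p).1 = (dualPlaq q).1 := by rw [h]
    unfold dualPlaq at h0
    simp only [hi, hj] at h0
    have h1 := sub_left_injective (G := V4) h0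
    exact sub_left_injective (G := V4) h1
  exact Prod.ext hbase (Prod.ext hi hj)


/-- Pull back connectivity of the dual surface to the surface itself. -/
lemma vortex_connected {x : Edge → Bool} {S : Set Plaq} (hneg : ∀ p ∈ S, p ∈ negPlaqs x)
    (hconn : SurfConnected (dualSurf S)) {p : Plaq} (hp : p ∈ S) :
    ∀ q ∈ S, Relation.ReflTransGen (fun u v => u ∈ S ∧ v ∈ S ∧ DAdj u v) p q := by
  intro q hq
  have h := hconn (dualPlaq p) ⟨p, hp, rfl⟩ (dualPlaq q) ⟨q, hq, rfl⟩
  have key : ∀ b, Relation.ReflTransGen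
      (fun u v => u ∈ dualSurf S ∧ v ∈ dualSurf S ∧ PlaqAdj u v) (dualPlaq p) b →
      ∀ r ∈ S, dualPlaq r = b →
        Relation.ReflTransGen (fun u v => u ∈ S ∧ v ∈ S ∧ DAdj u v) p r := by
    intro b hb
    induction hb with
    | refl =>
      intro r hr hdr
      have : r = p := dualPlaq_injOn (hneg r hr).1 (hneg p hp).1 hdr
      rw [this]
    | @tail b c hab hbc ih =>
      intro r hr hdr
      obtain ⟨hbS, hcS, hadj⟩ := hbc
      obtain ⟨u, huS, hub⟩ := hbS
      have hchain := ih u huS hub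
      refine hchain.tail ?_
      refine ⟨huS, hr, ?_⟩
      unfold DAdj
      rw [hub, hdr]
      exact hadj
  exact key (dualPlaq q) h q hq rfl

/-- Sets grown one adjacent plaquette at a time from `p`. -/
inductive Grown (p : Plaq) : ℕ → Finset Plaq → Prop
  | base : Grown p 1 {p}
  | step {k : ℕ} {T : Finset Plaq} {u v : Plaq} :
      Grown p k T → v ∉ T → u ∈ T → DAdj u v → Grown p (k + 1) (insert v T)

lemma Grown.card {p : Plaq} {k : ℕ} {T : Finset Plaq} (h : Grown p k T) : T.card = k := by
  induction h with
  | base => simp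
  | step hG hv hu hadj ih => rw [Finset.card_insert_of_notMem hv, ih]

lemma Grown.mem {p : Plaq} {k : ℕ} {T : Finset Plaq} (h : Grown p k T) : p ∈ T := by
  induction h with
  | base => simp
  | step hG hv hu hadj ih => exact Finset.mem_insert_of_mem ih

/-- Crossing lemma: a chain starting in `T` and ending outside finds an exit step. -/
lemma crossing {S : Set Plaq} {T : Finset Plaq} {a b : Plaq}
    (h : Relation.ReflTransGen (fun u v => u ∈ S ∧ v ∈ S ∧ DAdj u v) a b)
    (ha : a ∈ T) (hb : b ∉ T) :
    ∃ u v, u ∈ T ∧ v ∉ T ∧ v ∈ S ∧ DAdj u v := by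
  induction h with
  | refl => exact absurd ha hb
  | @tail c d hac hcd ih =>
    by_cases hcT : c ∈ T
    · exact ⟨c, d, hcT, hb, hcd.2.1, hcd.2.2⟩
    · exact ih hcT

/-- Extraction of a grown subset of any prescribed size from a connected set. -/
lemma extract {S : Set Plaq} {p : Plaq} (hp : p ∈ S)
    (hconn : ∀ q ∈ S, Relation.ReflTransGen (fun u v => u ∈ S ∧ v ∈ S ∧ DAdj u v) p q)
    (m : ℕ) (hm : 1 ≤ m) (hcard : (m : ℕ∞) ≤ S.encard) :
    ∃ T : Finset Plaq, ↑T ⊆ S ∧ Grown p m T := by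
  induction m with
  | zero => omega
  | succ n ih =>
    by_cases hn : 1 ≤ n
    · obtain ⟨T, hTS, hG⟩ := ih hn (le_trans (by exact_mod_cast Nat.cast_le.2 (Nat.le_succ n)) hcard)
      have hTcard : T.card = n := hG.card
      have hex : ∃ q₀, q₀ ∈ S \ ↑T := by
        by_contra hno
        push_neg at hno
        have hsub : S ⊆ ↑T := by
          intro s hs
          by_contra hsT
          exact hno s ⟨hs, hsT⟩
        have h1 : S.encard ≤ T.card := by
          rw [← Set.encard_coe_eq_coe_finsetCard]
          exact Set.encard_mono hsub
        rw [hTcard] at h1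
        have h2 : ((n + 1 : ℕ) : ℕ∞) ≤ (n : ℕ∞) := le_trans hcard h1
        rw [Nat.cast_le] at h2
        omega
      obtain ⟨q₀, hq₀S, hq₀T⟩ := hex
      have hchain := hconn q₀ hq₀S
      obtain ⟨u, v, huT, hvT, hvS, hadj⟩ := crossing hchain (by
        exact_mod_cast hG.mem) (by exact_mod_cast hq₀T)
      refine ⟨insert v T, ?_, hG.step hvT huT hadj⟩
      intro s hs
      rcases Finset.mem_insert.1 (by exact_mod_cast hs) with rfl | hsT
      · exact hvS
      · exact hTS hsT
    · have hn0 : n = 0 := by omega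
      subst hn0
      refine ⟨{p}, ?_, Grown.base⟩
      intro s hs
      have : s = p := by simpa using hs
      rw [this]; exact hp

/-! ### Part 10: locality and counting of grown sets -/

/-- A finite superset of the dual-adjacency neighbors of a plaquette. -/
noncomputable def nbrs (q : Plaq) : Finset Plaq :=
  (cubeV (fun i => q.1 i - 8) 16) ×ˢ (Finset.univ : Finset (Fin 4 × Fin 4))

lemma mem_plaqEdges_base {e : Edge} {P : Plaq} (h : e ∈ plaqEdges P) (i : Fin 4) :
    P.1 i ≤ e.1 i + 1 ∧ e.1 i ≤ P.1 i + 1 := by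
  simp only [plaqEdges, Finset.mem_insert, Finset.mem_singleton] at h
  rcases h with rfl | rfl | rfl | rfl <;> constructor <;>
    (try simp only [Pi.add_apply, unitVec]) <;> (try split_ifs) <;> omega

lemma dualPlaq_base_close (P : Plaq) (i : Fin 4) :
    P.1 i - 2 ≤ (dualPlaq P).1 i ∧ (dualPlaq P).1 i ≤ P.1 i := by
  show P.1 i - 2 ≤ (P.1 - unitVec _ - unitVec _) i ∧ (P.1 - unitVec _ - unitVec _) i ≤ P.1 i
  simp only [Pi.sub_apply, unitVec]
  constructor <;> split_ifs <;> omega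

lemma DAdj_mem_nbrs {q r : Plaq} (h : DAdj q r) : r ∈ nbrs q := by
  obtain ⟨hne, ε, hε⟩ := h
  rw [Finset.mem_inter] at hε
  obtain ⟨hε1, hε2⟩ := hε
  rw [nbrs, Finset.mem_product]
  refine ⟨?_, Finset.mem_univ _⟩
  rw [cubeV, Fintype.mem_piFinset]
  intro i
  rw [Finset.mem_Icc]
  have h1 := mem_plaqEdges_base hε1 i
  have h2 := mem_plaqEdges_base hε2 i
  have h3 := dualPlaq_base_close q i
  have h4 := dualPlaq_base_close r i
  omega

/-- The ball of radius `k` around `p` in the dual-adjacency graph (as a finite superset). -/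
noncomputable def ball (p : Plaq) : ℕ → Finset Plaq
  | 0 => {p}
  | k + 1 => ball p k ∪ (ball p k).biUnion nbrs

lemma ball_subset_succ (p : Plaq) (k : ℕ) : ball p k ⊆ ball p (k + 1) :=
  Finset.subset_union_left

lemma Grown.subset_ball {p : Plaq} {k : ℕ} {T : Finset Plaq} (h : Grown p k T) :
    T ⊆ ball p k := by
  induction h with
  | base =>
    intro s hs
    rw [Finset.mem_singleton] at hs
    rw [hs]
    exact ball_subset_succ p 0 (by simp [ball])
  | @step k T u v hG hv hu hadj ih =>
    intro s hs
    rcases Finset.mem_insert.1 hs with rfl | hsT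
    · refine Finset.mem_union_right _ ?_
      rw [Finset.mem_biUnion]
      exact ⟨u, ih hu, DAdj_mem_nbrs hadj⟩
    · exact ball_subset_succ p k (ih hsT)

lemma card_nbrs (q : Plaq) : (nbrs q).card ≤ 1336336 := by
  rw [nbrs, Finset.card_product]
  have h1 : (cubeV (fun i => q.1 i - 8) 16).card = 17 ^ 4 := by
    rw [cubeV, Fintype.card_piFinset]
    have : ∀ i : Fin 4, (Finset.Icc (q.1 i - 8) (q.1 i - 8 + (16 : ℕ))).card = 17 := by
      intro i
      rw [Int.card_Icc]
      omega
    rw [Finset.prod_congr rfl (fun i _ => this i)]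
    norm_num
  rw [h1]
  simp

lemma card_ball (p : Plaq) (k : ℕ) : (ball p k).card ≤ 1336337 ^ k := by
  induction k with
  | zero => simp [ball]
  | succ k ih =>
    have h1 : (ball p (k+1)).card ≤ (ball p k).card + ∑ a ∈ ball p k, (nbrs a).card := by
      refine le_trans (Finset.card_union_le _ _) ?_
      exact Nat.add_le_add_left (Finset.card_biUnion_le) _
    have h2 : ∑ a ∈ ball p k, (nbrs a).card ≤ (ball p k).card * 1336336 := by
      refine le_trans (Finset.sum_le_card_nsmul _ _ 1336336 (fun a _ => card_nbrs a)) ?_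
      simp [mul_comm]
    calc (ball p (k+1)).card ≤ (ball p k).card + (ball p k).card * 1336336 := le_trans h1 (by omega)
      _ = (ball p k).card * 1336337 := by ring
      _ ≤ 1336337 ^ k * 1336337 := Nat.mul_le_mul_right _ ih
      _ = 1336337 ^ (k + 1) := by ring

lemma grownSet_finite (p : Plaq) (m : ℕ) : {T : Finset Plaq | Grown p m T}.Finite := by
  refine Set.Finite.subset (Finset.finite_toSet ((ball p m).powerset)) ?_
  intro T hT
  rw [Finset.coe_powerset]
  exact hT.subset_ball

lemma grownSet_card (p : Plaq) (m : ℕ) :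
    (grownSet_finite p m).toFinset.card ≤ 2 ^ (1336337 ^ m) := by
  have h1 : (grownSet_finite p m).toFinset ⊆ (ball p m).powerset := by
    intro T hT
    rw [Set.Finite.mem_toFinset] at hT
    rw [Finset.mem_powerset]
    exact hT.subset_ball
  calc (grownSet_finite p m).toFinset.card ≤ ((ball p m).powerset).card :=
        Finset.card_le_card h1
    _ = 2 ^ (ball p m).card := Finset.card_powerset _
    _ ≤ 2 ^ (1336337 ^ m) := Nat.pow_le_pow_right (by norm_num) (card_ball p m)

/-- **Corollary 6.2 (Rarity of large vortices).**
There is `β₀ > 0` such that the following holds whenever `β ≥ β₀`.  Let `μ_β` be any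
subsequential weak limit of the finite-volume Ising lattice gauge measures.  For any
`m ≥ 1` there is a constant `C_m`, depending only on `m`, such that for any plaquette `p`,
the `μ_β`-probability that `p` is contained in a vortex of size at least `m` is at most
`C_m e^{-2βm}`. -/
theorem rarity_of_large_vortices :
    ∃ β₀ : ℝ, 0 < β₀ ∧
      ∀ m : ℕ, 1 ≤ m →
        ∃ Cm : ℝ, 0 < Cm ∧
          ∀ β : ℝ, β₀ ≤ β →
          ∀ μ : MeasureTheory.Measure (Edge → Bool), IsGibbsLimit β μ →
          ∀ p : Plaq, p.2.1 < p.2.2 →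
            (μ {x | ∃ S : Set Plaq, IsVortex x S ∧ p ∈ S ∧ (m : ℕ∞) ≤ S.encard}).toReal ≤
              Cm * Real.exp (-2 * β * (m : ℝ)) := by
  classical
  refine ⟨1, one_pos, ?_⟩
  intro m hm
  refine ⟨((2 ^ (1336337 ^ m) : ℕ) : ℝ), by positivity, ?_⟩
  intro β hβ μ hμ p hp
  haveI := hμ.1
  have hβ0 : (0 : ℝ) ≤ β := le_trans zero_le_one hβ
  set F : Finset (Finset Plaq) :=
    (grownSet_finite p m).toFinset.filter (fun T => ∀ q ∈ T, q.2.1 < q.2.2) with hF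
  have hincl : {x | ∃ S : Set Plaq, IsVortex x S ∧ p ∈ S ∧ (m : ℕ∞) ≤ S.encard}
      ⊆ ⋃ T ∈ F, negSet T := by
    intro x hx
    obtain ⟨S, ⟨hSne, hSneg, hclosed, hconn⟩, hpS, hcard⟩ := hx
    have hchain := vortex_connected hSneg hconn hpS
    obtain ⟨T, hTS, hG⟩ := extract hpS hchain m hm hcard
    have hTF : T ∈ F := by
      rw [hF, Finset.mem_filter]
      refine ⟨?_, ?_⟩
      · rw [Set.Finite.mem_toFinset]; exact hG
      · intro q hq
        exact (hSneg q (hTS hq)).1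
    refine Set.mem_biUnion hTF ?_
    intro q hq
    exact (hSneg q (hTS hq)).2
  have hsub : μ {x | ∃ S : Set Plaq, IsVortex x S ∧ p ∈ S ∧ (m : ℕ∞) ≤ S.encard}
      ≤ ∑ T ∈ F, μ (negSet T) :=
    le_trans (measure_mono hincl) (measure_biUnion_finset_le F negSet)
  have hbound : ∀ T ∈ F, μ (negSet T) ≤ ENNReal.ofReal (Real.exp (-2 * β * m)) := by
    intro T hT
    rw [hF, Finset.mem_filter, Set.Finite.mem_toFinset] at hT
    have hcardT : T.card = m := hT.1.card
    have := mu_bound β hβ0 μ hμ T hT.2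
    rwa [hcardT] at this
  have hsum : (∑ T ∈ F, μ (negSet T))
      ≤ ENNReal.ofReal (((2 ^ (1336337 ^ m) : ℕ) : ℝ) * Real.exp (-2 * β * m)) := by
    calc (∑ T ∈ F, μ (negSet T)) ≤ ∑ _T ∈ F, ENNReal.ofReal (Real.exp (-2 * β * m)) :=
          Finset.sum_le_sum hbound
      _ = (F.card : ℝ≥0∞) * ENNReal.ofReal (Real.exp (-2 * β * m)) := by
          rw [Finset.sum_const, nsmul_eq_mul]
      _ ≤ ((2 ^ (1336337 ^ m) : ℕ) : ℝ≥0∞) * ENNReal.ofReal (Real.exp (-2 * β * m)) := by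
          refine mul_le_mul_left ?_ _
          have hcF : F.card ≤ 2 ^ (1336337 ^ m) := by
            refine le_trans (Finset.card_le_card (Finset.filter_subset _ _)) ?_
            exact grownSet_card p m
          exact_mod_cast Nat.cast_le.2 hcF
      _ = ENNReal.ofReal (((2 ^ (1336337 ^ m) : ℕ) : ℝ) * Real.exp (-2 * β * m)) := by
          rw [ENNReal.ofReal_mul (by positivity)]
          congr 1
          rw [ENNReal.ofReal_natCast]
  refine ENNReal.toReal_le_of_le_ofReal (by positivity) ?_
  exact le_trans hsub hsum
end

section
/- There exist β₀ > 0 and a universal constant C > 0 such that the following holds whenever β ≥ β₀. Let μ_β be any subsequential weak limit of the finite-volume Ising lattice gauge measures. Then for every nonempty generalized loop γ in ℤ⁴ with ℓ edges, of which ℓ₀ are corner edges, |μ_β(W_γ)| ≤ exp(−C·(ℓ−ℓ₀)·e^{−12β}). -/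
open MeasureTheory

/-- The Wilson loop variable `W_γ = ∏_{e ∈ γ} σ_e` of a configuration `x : Edge → Bool`. -/
noncomputable def wilsonB (γ : Finset Edge) (x : Edge → Bool) : ℝ :=
  ∏ e ∈ γ, boolSpin (x e)

-- ============ new development ============
open Finset Classical

section Flip
variable (a : V4) (w : ℕ)

noncomputable def flipS (u : Finset Edge) (σ : Config a w) : Config a w :=
  fun x => if (x : Edge) ∈ u then !(σ x) else σ x

lemma flipS_flipS {u v : Finset Edge} (h : Disjoint u v) (σ : Config a w) :
    flipS a w u (flipS a w v σ) = flipS a w (u ∪ v) σ := by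
  funext x
  by_cases hu : (x : Edge) ∈ u
  · have hv : (x : Edge) ∉ v := Finset.disjoint_left.1 h hu
    simp [flipS, hu, hv]
  · by_cases hv : (x : Edge) ∈ v <;> simp [flipS, hu, hv]

lemma flipS_invol (u : Finset Edge) (σ : Config a w) :
    flipS a w u (flipS a w u σ) = σ := by
  funext x; by_cases hu : (x : Edge) ∈ u <;> simp [flipS, hu]

lemma boolSpin_not (b : Bool) : boolSpin (!b) = - boolSpin b := by
  cases b <;> simp [boolSpin]

lemma abs_boolSpin (b : Bool) : |boolSpin b| ≤ 1 := by
  cases b <;> simp [boolSpin]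

lemma abs_extSpin (σ : Config a w) (e : Edge) : |extSpin a w σ e| ≤ 1 := by
  unfold extSpin; split
  · exact abs_boolSpin _
  · simp

lemma extSpin_flipS_not_mem {u : Finset Edge} {e : Edge} (h : e ∉ u) (σ : Config a w) :
    extSpin a w (flipS a w u σ) e = extSpin a w σ e := by
  unfold extSpin; split
  · simp [flipS, h]
  · rfl

lemma extSpin_flipS_mem {u : Finset Edge} {e : Edge} (h : e ∈ u) (he : e ∈ cubeEdges a w)
    (σ : Config a w) : extSpin a w (flipS a w u σ) e = - extSpin a w σ e := by
  unfold extSpin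
  rw [dif_pos he, dif_pos he]
  simp [flipS, h, boolSpin_not]

lemma plaqSpin_congr {f g : Edge → ℝ} {p : Plaq} (h : ∀ e ∈ plaqEdges p, f e = g e) :
    plaqSpin f p = plaqSpin g p := by
  unfold plaqSpin
  rw [h _ (by simp [plaqEdges]), h _ (by simp [plaqEdges]), h _ (by simp [plaqEdges]),
    h _ (by simp [plaqEdges])]

lemma plaqSpin_flipS_disjoint {u : Finset Edge} {p : Plaq} (h : ∀ e ∈ u, e ∉ plaqEdges p)
    (σ : Config a w) :
    plaqSpin (extSpin a w (flipS a w u σ)) p = plaqSpin (extSpin a w σ) p :=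
  plaqSpin_congr fun e he => extSpin_flipS_not_mem a w (fun hu => h e hu he) σ

lemma extSpin_congr_at {τ τ' : Config a w} {f : Edge}
    (h : ∀ hf : f ∈ cubeEdges a w, τ ⟨f, hf⟩ = τ' ⟨f, hf⟩) :
    extSpin a w τ f = extSpin a w τ' f := by
  unfold extSpin
  split
  · next hf => rw [h hf]
  · rfl

noncomputable def eDiff (e : Edge) (σ : Config a w) : ℝ :=
  energy a w (flipS a w {e} σ) - energy a w σ

lemma eDiff_flipS {e : Edge} {u : Finset Edge} (he : e ∉ u)
    (h : ∀ p ∈ cubePlaqs a w, e ∈ plaqEdges p → ∀ e' ∈ u, e' ∉ plaqEdges p)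
    (σ : Config a w) : eDiff a w e (flipS a w u σ) = eDiff a w e σ := by
  have hcomm : flipS a w {e} (flipS a w u σ) = flipS a w u (flipS a w {e} σ) := by
    rw [flipS_flipS a w (by simpa using he), flipS_flipS a w (by simpa using fun h' => he h'),
      Finset.union_comm]
  unfold eDiff energy
  rw [hcomm, ← Finset.sum_sub_distrib, ← Finset.sum_sub_distrib]
  refine Finset.sum_congr rfl fun p hp => ?_
  by_cases hep : e ∈ plaqEdges p
  · have hu : ∀ e' ∈ u, e' ∉ plaqEdges p := h p hp hep
    rw [plaqSpin_flipS_disjoint a w hu, plaqSpin_flipS_disjoint a w hu]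
  · have h2 : plaqSpin (extSpin a w (flipS a w u (flipS a w {e} σ))) p =
        plaqSpin (extSpin a w (flipS a w u σ)) p := by
      refine plaqSpin_congr fun f hf => extSpin_congr_at a w fun hfE => ?_
      have hfe : f ≠ e := fun h' => hep (h' ▸ hf)
      simp [flipS, hfe]
    have h1 : plaqSpin (extSpin a w (flipS a w {e} σ)) p = plaqSpin (extSpin a w σ) p :=
      plaqSpin_flipS_disjoint a w (by simpa using hep) σ
    rw [h1, h2, sub_self, sub_self]

lemma energy_flipS {u : Finset Edge}
    (hu : ∀ e ∈ u, ∀ e' ∈ u, e' ≠ e → ∀ p ∈ cubePlaqs a w, e ∈ plaqEdges p → e' ∉ plaqEdges p)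
    (σ : Config a w) :
    energy a w (flipS a w u σ) = energy a w σ + ∑ e ∈ u, eDiff a w e σ := by
  classical
  induction u using Finset.induction_on with
  | empty =>
    have : flipS a w ∅ σ = σ := funext fun x => by simp [flipS]
    rw [this]; simp
  | @insert e u hnotmem ih =>
    have hins : flipS a w (insert e u) σ = flipS a w {e} (flipS a w u σ) := by
      rw [flipS_flipS a w (by simpa using hnotmem), ← Finset.insert_eq]
    rw [hins]
    have h1 : energy a w (flipS a w {e} (flipS a w u σ)) =
        energy a w (flipS a w u σ) + eDiff a w e (flipS a w u σ) := by
      unfold eDiff; ring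
    rw [h1, eDiff_flipS a w hnotmem
      (fun p hp hep e' he' => hu e (mem_insert_self e u) e' (mem_insert_of_mem he')
        (by rintro rfl; exact hnotmem he') p hp hep) σ,
      ih (fun x hx y hy hyx => hu x (mem_insert_of_mem hx) y (mem_insert_of_mem hy) hyx),
      Finset.sum_insert hnotmem]
    ring
end Flip

section Count
variable (a : V4) (w : ℕ)

/-- sorted pair -/
def sp (k j : Fin 4) : Fin 4 × Fin 4 := if k < j then (k, j) else (j, k)

lemma card_plaqs_containing (e : Edge) :
    ((cubePlaqs a w).filter (fun p => e ∈ plaqEdges p)).card ≤ 6 := by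
  classical
  set T : Finset Plaq :=
    ((Finset.univ.erase e.2).image fun j => ((e.1, sp e.2 j) : Plaq)) ∪
    ((Finset.univ.erase e.2).image fun j => ((e.1 - unitVec j, sp e.2 j) : Plaq)) with hT
  have hsub : ((cubePlaqs a w).filter (fun p => e ∈ plaqEdges p)) ⊆ T := by
    intro p hp
    rw [Finset.mem_filter] at hp
    obtain ⟨hp1, hp2⟩ := hp
    rw [cubePlaqs, Finset.mem_filter] at hp1
    obtain ⟨-, hlt, -⟩ := hp1
    obtain ⟨y, i, j⟩ := p
    simp only [plaqEdges, Finset.mem_insert, Finset.mem_singleton] at hp2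
    simp only at hlt
    have hij : i ≠ j := ne_of_lt hlt
    have hji : ¬ (j < i) := not_lt_of_gt hlt
    rw [hT, Finset.mem_union, Finset.mem_image, Finset.mem_image]
    rcases hp2 with h | h | h | h <;> subst h
    · exact Or.inl ⟨j, Finset.mem_erase.2 ⟨by simpa using hij.symm, Finset.mem_univ j⟩,
        by simp [sp, hlt]⟩
    · exact Or.inl ⟨i, Finset.mem_erase.2 ⟨by simpa using hij, Finset.mem_univ i⟩,
        by simp [sp, hji]⟩
    · exact Or.inr ⟨i, Finset.mem_erase.2 ⟨by simpa using hij, Finset.mem_univ i⟩,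
        by simp [sp, hji]⟩
    · exact Or.inr ⟨j, Finset.mem_erase.2 ⟨by simpa using hij.symm, Finset.mem_univ j⟩,
        by simp [sp, hlt]⟩
  calc ((cubePlaqs a w).filter (fun p => e ∈ plaqEdges p)).card ≤ T.card :=
        Finset.card_le_card hsub
    _ ≤ 3 + 3 := by
        refine le_trans (Finset.card_union_le _ _) ?_
        have h3 : (Finset.univ.erase e.2).card = 3 := by
          rw [Finset.card_erase_of_mem (Finset.mem_univ _)]; simp
        gcongr <;> exact le_trans (Finset.card_image_le) (le_of_eq h3)
    _ ≤ 6 := by norm_num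

lemma abs_plaqSpin_le (σ : Config a w) (p : Plaq) : |plaqSpin (extSpin a w σ) p| ≤ 1 := by
  unfold plaqSpin
  rw [abs_mul, abs_mul, abs_mul]
  have h := abs_extSpin a w σ
  exact mul_le_one₀ (mul_le_one₀ (mul_le_one₀ (h _) (abs_nonneg _) (h _)) (abs_nonneg _) (h _))
    (abs_nonneg _) (h _)

lemma abs_eDiff_le (e : Edge) (σ : Config a w) : |eDiff a w e σ| ≤ 12 := by
  classical
  unfold eDiff energy
  rw [← Finset.sum_sub_distrib]
  calc |∑ p ∈ cubePlaqs a w,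
          (plaqSpin (extSpin a w (flipS a w {e} σ)) p - plaqSpin (extSpin a w σ) p)|
      ≤ ∑ p ∈ cubePlaqs a w,
          |plaqSpin (extSpin a w (flipS a w {e} σ)) p - plaqSpin (extSpin a w σ) p| :=
        Finset.abs_sum_le_sum_abs _ _
    _ = ∑ p ∈ (cubePlaqs a w).filter (fun p => e ∈ plaqEdges p),
          |plaqSpin (extSpin a w (flipS a w {e} σ)) p - plaqSpin (extSpin a w σ) p| := by
        rw [Finset.sum_filter_of_ne]
        intro p hp hne
        by_contra hc
        apply hne
        rw [plaqSpin_flipS_disjoint a w (by simpa using hc) σ, sub_self, abs_zero]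
    _ ≤ ∑ p ∈ (cubePlaqs a w).filter (fun p => e ∈ plaqEdges p), (2:ℝ) := by
        refine Finset.sum_le_sum fun p hp => ?_
        have h1 := abs_plaqSpin_le a w (flipS a w {e} σ) p
        have h2 := abs_plaqSpin_le a w σ p
        have h3 := abs_sub (plaqSpin (extSpin a w (flipS a w {e} σ)) p)
          (plaqSpin (extSpin a w σ) p)
        linarith
    _ = (((cubePlaqs a w).filter (fun p => e ∈ plaqEdges p)).card : ℝ) * 2 := by
        rw [Finset.sum_const, nsmul_eq_mul]
    _ ≤ 6 * 2 := by
        have := card_plaqs_containing a w e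
        gcongr
        exact_mod_cast this
    _ = 12 := by norm_num
end Count

section Core
variable (a : V4) (w : ℕ)

lemma key_ineq {β d : ℝ} (hβ : 0 ≤ β) (hd : |d| ≤ 12) :
    |1 - Real.exp (β * d)| ≤
      (1 - Real.exp (-12 * β)) / (1 + Real.exp (-12 * β)) * (1 + Real.exp (β * d)) := by
  set q := Real.exp (-12 * β) with hqdef
  set r := Real.exp (β * d) with hrdef
  have hq : 0 < q := Real.exp_pos _
  have hr : 0 < r := Real.exp_pos _
  have hd1 : -12 ≤ d := by have := abs_le.1 hd; linarith [this.1]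
  have hd2 : d ≤ 12 := (abs_le.1 hd).2
  have hqr : q ≤ r := by
    rw [hqdef, hrdef]
    exact Real.exp_le_exp.2 (by nlinarith)
  have hqr2 : q * r ≤ 1 := by
    rw [hqdef, hrdef, ← Real.exp_add]
    have : -12 * β + β * d ≤ 0 := by nlinarith
    calc Real.exp (-12 * β + β * d) ≤ Real.exp 0 := Real.exp_le_exp.2 this
      _ = 1 := Real.exp_zero
  rw [div_mul_eq_mul_div, le_div_iff₀ (by linarith)]
  rcases abs_cases (1 - r) with ⟨h1, h2⟩ | ⟨h1, h2⟩ <;> rw [h1] <;> nlinarith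

/-- The general flip-expansion identity. -/
lemma sum_expand (β : ℝ) (S : Finset Edge)
    (hind : ∀ e ∈ S, ∀ e' ∈ S, e' ≠ e → ∀ p ∈ cubePlaqs a w, e ∈ plaqEdges p → e' ∉ plaqEdges p)
    (G : Config a w → ℝ) (c : ℝ)
    (hG : ∀ u ∈ S.powerset, ∀ σ : Config a w, G (flipS a w u σ) = c ^ u.card * G σ) :
    (2 : ℝ) ^ S.card * ∑ σ : Config a w, G σ * Real.exp (β * energy a w σ) =
      ∑ σ : Config a w, G σ * Real.exp (β * energy a w σ) *
        ∏ e ∈ S, (1 + c * Real.exp (β * eDiff a w e σ)) := by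
  classical
  have hbij : ∀ u : Finset Edge,
      (∑ σ : Config a w, G (flipS a w u σ) * Real.exp (β * energy a w (flipS a w u σ))) =
      ∑ σ : Config a w, G σ * Real.exp (β * energy a w σ) := by
    intro u
    have hinv : Function.Involutive (flipS a w u) := fun σ => flipS_invol a w u σ
    exact Fintype.sum_bijective (flipS a w u) hinv.bijective _ _ (fun σ => rfl)
  have step1 : (2 : ℝ) ^ S.card * ∑ σ : Config a w, G σ * Real.exp (β * energy a w σ) =
      ∑ u ∈ S.powerset, ∑ σ : Config a w,
        G (flipS a w u σ) * Real.exp (β * energy a w (flipS a w u σ)) := by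
    rw [Finset.sum_congr rfl fun u _ => hbij u, Finset.sum_const, Finset.card_powerset,
      nsmul_eq_mul]
    push_cast
    ring
  rw [step1, Finset.sum_comm]
  refine Finset.sum_congr rfl fun σ _ => ?_
  have hterm : ∀ u ∈ S.powerset,
      G (flipS a w u σ) * Real.exp (β * energy a w (flipS a w u σ)) =
      G σ * Real.exp (β * energy a w σ) *
        ∏ e ∈ u, (c * Real.exp (β * eDiff a w e σ)) := by
    intro u hu
    have husub := Finset.mem_powerset.1 hu
    have hE : energy a w (flipS a w u σ) = energy a w σ + ∑ e ∈ u, eDiff a w e σ :=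
      energy_flipS a w
        (fun e he e' he' => hind e (husub he) e' (husub he')) σ
    rw [hG u hu σ, hE, mul_add, Real.exp_add, Finset.mul_sum, Real.exp_sum,
      Finset.prod_mul_distrib, Finset.prod_const]
    ring
  rw [Finset.sum_congr rfl hterm, ← Finset.mul_sum]
  congr 1
  rw [Finset.prod_add (fun _ => (1:ℝ)) (fun e => c * Real.exp (β * eDiff a w e σ)) S]
  refine Finset.sum_nbij' (fun t => S \ t) (fun t => S \ t) ?_ ?_ ?_ ?_ ?_
  · intro t ht
    exact Finset.mem_powerset.2 (Finset.sdiff_subset)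
  · intro t ht
    exact Finset.mem_powerset.2 (Finset.sdiff_subset)
  · intro t ht
    exact Finset.sdiff_sdiff_eq_self (Finset.mem_powerset.1 ht)
  · intro t ht
    exact Finset.sdiff_sdiff_eq_self (Finset.mem_powerset.1 ht)
  · intro t ht
    rw [Finset.prod_const_one, one_mul, Finset.sdiff_sdiff_eq_self (Finset.mem_powerset.1 ht)]

end Core

section CoreBound
variable (a : V4) (w : ℕ)

lemma wilson_flipS {γ u : Finset Edge} (huγ : u ⊆ γ) (huE : u ⊆ cubeEdges a w)
    (σ : Config a w) :
    wilson γ (extSpin a w (flipS a w u σ)) = (-1 : ℝ) ^ u.card * wilson γ (extSpin a w σ) := by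
  classical
  unfold wilson
  have hcongr : ∀ f ∈ γ, extSpin a w (flipS a w u σ) f =
      (if f ∈ u then (-1 : ℝ) else 1) * extSpin a w σ f := by
    intro f hf
    by_cases hfu : f ∈ u
    · rw [if_pos hfu, extSpin_flipS_mem a w hfu (huE hfu)]; ring
    · rw [if_neg hfu, extSpin_flipS_not_mem a w hfu]; ring
  rw [Finset.prod_congr rfl hcongr, Finset.prod_mul_distrib]
  congr 1
  rw [show (∏ f ∈ γ, if f ∈ u then (-1 : ℝ) else 1) = ∏ f ∈ γ.filter (· ∈ u), (-1 : ℝ) from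
    (Finset.prod_filter (· ∈ u) (fun _ => (-1:ℝ))).symm]
  rw [Finset.filter_mem_eq_inter, Finset.inter_eq_right.2 huγ, Finset.prod_const]

lemma abs_wilson_le (γ : Finset Edge) (σ : Config a w) : |wilson γ (extSpin a w σ)| ≤ 1 := by
  unfold wilson
  rw [Finset.abs_prod]
  exact Finset.prod_le_one (fun f _ => abs_nonneg _) (fun f _ => abs_extSpin a w σ f)

lemma core_bound (β : ℝ) (hβ : 0 ≤ β) (γ S : Finset Edge) (hSγ : S ⊆ γ)
    (hSE : S ⊆ cubeEdges a w)
    (hind : ∀ e ∈ S, ∀ e' ∈ S, e' ≠ e → ∀ p ∈ cubePlaqs a w, e ∈ plaqEdges p → e' ∉ plaqEdges p) :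
    |∑ σ : Config a w, wilson γ (extSpin a w σ) * Real.exp (β * energy a w σ)| ≤
      ((1 - Real.exp (-12 * β)) / (1 + Real.exp (-12 * β))) ^ S.card *
        ∑ σ : Config a w, Real.exp (β * energy a w σ) := by
  classical
  set q := Real.exp (-12 * β) with hqdef
  set t := (1 - q) / (1 + q) with htdef
  have hq0 : 0 < q := Real.exp_pos _
  have hq1 : q ≤ 1 := by
    rw [hqdef, show (1:ℝ) = Real.exp 0 from Real.exp_zero.symm]
    exact Real.exp_le_exp.2 (by nlinarith)
  have ht0 : 0 ≤ t := div_nonneg (by linarith) (by linarith)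
  have h2 := sum_expand a w β S hind (fun σ => wilson γ (extSpin a w σ)) (-1)
    (fun u hu σ => wilson_flipS a w (fun x hx => hSγ (Finset.mem_powerset.1 hu hx))
      (fun x hx => hSE (Finset.mem_powerset.1 hu hx)) σ)
  have h3 := sum_expand a w β S hind (fun _ => (1:ℝ)) 1 (fun u hu σ => by simp)
  simp only [one_mul] at h3
  -- pointwise bound
  have h4 : ∀ σ : Config a w,
      |wilson γ (extSpin a w σ) * Real.exp (β * energy a w σ) *
        ∏ e ∈ S, (1 + (-1) * Real.exp (β * eDiff a w e σ))| ≤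
      Real.exp (β * energy a w σ) *
        (t ^ S.card * ∏ e ∈ S, (1 + Real.exp (β * eDiff a w e σ))) := by
    intro σ
    rw [abs_mul, abs_mul, abs_of_pos (Real.exp_pos _), Finset.abs_prod]
    have hprod : ∏ e ∈ S, |1 + (-1) * Real.exp (β * eDiff a w e σ)| ≤
        t ^ S.card * ∏ e ∈ S, (1 + Real.exp (β * eDiff a w e σ)) := by
      calc ∏ e ∈ S, |1 + (-1) * Real.exp (β * eDiff a w e σ)|
          ≤ ∏ e ∈ S, (t * (1 + Real.exp (β * eDiff a w e σ))) := by
            refine Finset.prod_le_prod (fun e _ => abs_nonneg _) (fun e _ => ?_)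
            have := key_ineq hβ (abs_eDiff_le a w e σ)
            rw [htdef, hqdef]
            calc |1 + (-1) * Real.exp (β * eDiff a w e σ)|
                = |1 - Real.exp (β * eDiff a w e σ)| := by ring_nf
              _ ≤ _ := this
        _ = t ^ S.card * ∏ e ∈ S, (1 + Real.exp (β * eDiff a w e σ)) := by
            rw [Finset.prod_mul_distrib, Finset.prod_const]
    have hW := abs_wilson_le a w γ σ
    have hprodnn : (0:ℝ) ≤ ∏ e ∈ S, |1 + (-1) * Real.exp (β * eDiff a w e σ)| :=
      Finset.prod_nonneg fun e _ => abs_nonneg _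
    have hexp : (0:ℝ) < Real.exp (β * energy a w σ) := Real.exp_pos _
    nlinarith [mul_le_mul_of_nonneg_left hprod (le_of_lt hexp),
      mul_nonneg (le_of_lt hexp) hprodnn, hW, abs_nonneg (wilson γ (extSpin a w σ))]
  have hmain : (2:ℝ) ^ S.card * |∑ σ : Config a w,
      wilson γ (extSpin a w σ) * Real.exp (β * energy a w σ)| ≤
      (2:ℝ) ^ S.card * (t ^ S.card * ∑ σ : Config a w, Real.exp (β * energy a w σ)) := by
    have habs : (2:ℝ) ^ S.card * |∑ σ : Config a w,
        wilson γ (extSpin a w σ) * Real.exp (β * energy a w σ)| =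
        |(2:ℝ) ^ S.card * ∑ σ : Config a w,
          wilson γ (extSpin a w σ) * Real.exp (β * energy a w σ)| := by
      rw [abs_mul, abs_of_pos (show (0:ℝ) < (2:ℝ)^S.card by positivity)]
    rw [habs, h2]
    calc |∑ σ : Config a w, wilson γ (extSpin a w σ) * Real.exp (β * energy a w σ) *
            ∏ e ∈ S, (1 + (-1) * Real.exp (β * eDiff a w e σ))|
        ≤ ∑ σ : Config a w, Real.exp (β * energy a w σ) *
            (t ^ S.card * ∏ e ∈ S, (1 + Real.exp (β * eDiff a w e σ))) :=
          le_trans (Finset.abs_sum_le_sum_abs _ _) (Finset.sum_le_sum fun σ _ => h4 σ)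
      _ = t ^ S.card * ∑ σ : Config a w, Real.exp (β * energy a w σ) *
            ∏ e ∈ S, (1 + Real.exp (β * eDiff a w e σ)) := by
          rw [Finset.mul_sum]
          exact Finset.sum_congr rfl fun σ _ => by ring
      _ = t ^ S.card * ((2:ℝ) ^ S.card * ∑ σ : Config a w, Real.exp (β * energy a w σ)) := by
          rw [← h3]
      _ = (2:ℝ) ^ S.card * (t ^ S.card * ∑ σ : Config a w, Real.exp (β * energy a w σ)) := by
          ring
  have h2pos : (0:ℝ) < (2:ℝ) ^ S.card := by positivity
  exact le_of_mul_le_mul_left hmain h2pos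
end CoreBound

section Measure
open MeasureTheory

lemma wilsonB_continuous (γ : Finset Edge) : Continuous (wilsonB γ) := by
  unfold wilsonB
  exact continuous_finset_prod γ fun e _ =>
    (continuous_of_discreteTopology (f := boolSpin)).comp (continuous_apply e)

lemma wilsonB_measurable (γ : Finset Edge) : Measurable (wilsonB γ) :=
  (wilsonB_continuous γ).measurable

lemma wilsonB_extBool (a : V4) (w : ℕ) (γ : Finset Edge) (σ : Config a w) :
    wilsonB γ (extBool a w σ) = wilson γ (extSpin a w σ) := by
  unfold wilsonB wilson
  refine Finset.prod_congr rfl fun e _ => ?_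
  unfold extBool extSpin
  split
  · rfl
  · simp [boolSpin]

lemma abs_wilsonB_le (γ : Finset Edge) (x : Edge → Bool) : |wilsonB γ x| ≤ 1 := by
  unfold wilsonB
  rw [Finset.abs_prod]
  exact Finset.prod_le_one (fun f _ => abs_nonneg _) (fun f _ => abs_boolSpin _)

lemma integral_gibbsMeasureN (N : ℕ) (β : ℝ) {f : (Edge → Bool) → ℝ} (hf : Measurable f) :
    ∫ x, f x ∂gibbsMeasureN N β =
      (∑ σ : Config (fun _ => -(N : ℤ)) (2 * N), Real.exp (β * energy (fun _ => -(N : ℤ)) (2 * N) σ))⁻¹ *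
      ∑ σ : Config (fun _ => -(N : ℤ)) (2 * N),
        f (extBool (fun _ => -(N : ℤ)) (2 * N) σ) *
          Real.exp (β * energy (fun _ => -(N : ℤ)) (2 * N) σ) := by
  set a : V4 := fun _ => -(N : ℤ)
  set w : ℕ := 2 * N
  unfold gibbsMeasureN
  rw [integral_smul_measure]
  have hint : ∀ σ : Config a w,
      Integrable f (ENNReal.ofReal (Real.exp (β * energy a w σ)) • Measure.dirac (extBool a w σ)) := by
    intro σ
    refine Integrable.smul_measure ?_ ENNReal.ofReal_ne_top
    refine ⟨hf.aestronglyMeasurable, ?_⟩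
    unfold HasFiniteIntegral
    rw [lintegral_dirac]
    exact ENNReal.coe_lt_top
  rw [integral_finset_sum_measure (fun σ _ => hint σ)]
  have hterm : ∀ σ : Config a w,
      ∫ x, f x ∂(ENNReal.ofReal (Real.exp (β * energy a w σ)) • Measure.dirac (extBool a w σ)) =
        f (extBool a w σ) * Real.exp (β * energy a w σ) := by
    intro σ
    rw [integral_smul_measure, integral_dirac, ENNReal.toReal_ofReal (Real.exp_nonneg _),
      smul_eq_mul]
    ring
  rw [Finset.sum_congr rfl fun σ _ => hterm σ]
  congr 1
  rw [ENNReal.toReal_inv]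
  congr 1
  rw [ENNReal.toReal_sum (fun σ _ => ENNReal.ofReal_ne_top)]
  exact Finset.sum_congr rfl fun σ _ => ENNReal.toReal_ofReal (Real.exp_nonneg _)
end Measure

section Final
open Finset

lemma exists_cube_contain (γ : Finset Edge) :
    ∃ N₀ : ℕ, ∀ N : ℕ, N₀ ≤ N → ∀ e ∈ γ, e ∈ cubeEdges (fun _ => -(N : ℤ)) (2 * N) := by
  classical
  set B : ℕ := (γ.sup fun e => Finset.univ.sup fun m => (e.1 m).natAbs) + 1 with hB
  refine ⟨B, fun N hN e he => ?_⟩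
  have h1 : ∀ m : Fin 4, (e.1 m).natAbs < N := by
    intro m
    have ha : (e.1 m).natAbs ≤ Finset.univ.sup fun m => (e.1 m).natAbs :=
      Finset.le_sup (f := fun m => (e.1 m).natAbs) (Finset.mem_univ m)
    have hb : (Finset.univ.sup fun m => (e.1 m).natAbs) ≤
        γ.sup fun e => Finset.univ.sup fun m => (e.1 m).natAbs :=
      Finset.le_sup (f := fun e : Edge => Finset.univ.sup fun m => (e.1 m).natAbs) he
    omega
  have h2 : ∀ m : Fin 4, -(N:ℤ) < e.1 m ∧ e.1 m < N := by
    intro m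
    have := h1 m
    have h3 : |e.1 m| < (N:ℤ) := by
      rw [Int.abs_eq_natAbs]
      exact_mod_cast this
    constructor <;> [linarith [abs_lt.1 h3 |>.1]; linarith [abs_lt.1 h3 |>.2]]
  have hmemV : ∀ x : V4, (∀ m, -(N:ℤ) ≤ x m ∧ x m ≤ N) →
      x ∈ cubeV (fun _ => -(N : ℤ)) (2 * N) := by
    intro x hx
    rw [cubeV, Fintype.mem_piFinset]
    intro m
    rw [Finset.mem_Icc]
    have := hx m
    push_cast
    constructor <;> linarith [this.1, this.2]
  rw [cubeEdges, Finset.mem_filter, Finset.mem_product]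
  refine ⟨⟨hmemV e.1 fun m => ⟨le_of_lt (h2 m).1, le_of_lt (h2 m).2⟩, Finset.mem_univ _⟩, ?_⟩
  refine hmemV _ fun m => ?_
  have h4 : (e.1 + unitVec e.2) m = e.1 m + if m = e.2 then 1 else 0 := rfl
  rw [h4]
  have := h2 m
  split <;> constructor <;> linarith [this.1, this.2]

lemma cornerCount_eq (γ : Finset Edge) :
    cornerCount γ = (γ.filter (fun e => IsCornerEdge γ e)).card := by
  classical
  unfold cornerCount
  rw [show {e ∈ (γ : Set Edge) | IsCornerEdge γ e} = ((γ.filter fun e => IsCornerEdge γ e) : Finset Edge) by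
    rw [Finset.coe_filter]; rfl, Set.ncard_coe_finset]

lemma card_noncorner (γ : Finset Edge) :
    ((γ.filter (fun e => ¬ IsCornerEdge γ e)).card : ℝ) = (γ.card : ℝ) - (cornerCount γ : ℝ) := by
  classical
  have h1 := Finset.card_filter_add_card_filter_not
    (s := γ) (p := fun e => IsCornerEdge γ e)
  rw [cornerCount_eq]
  have h2 : ((γ.filter fun e => IsCornerEdge γ e).card : ℝ) +
      ((γ.filter fun e => ¬ IsCornerEdge γ e).card : ℝ) = (γ.card : ℝ) := by
    exact_mod_cast h1
  linarith

lemma boundN (β : ℝ) (hβ : 0 ≤ β) (γ : Finset Edge) (N : ℕ)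
    (hγ : ∀ e ∈ γ, e ∈ cubeEdges (fun _ => -(N : ℤ)) (2 * N)) :
    |∫ x, wilsonB γ x ∂gibbsMeasureN N β| ≤
      ((1 - Real.exp (-12 * β)) / (1 + Real.exp (-12 * β)))
        ^ (γ.filter (fun e => ¬ IsCornerEdge γ e)).card := by
  classical
  set a : V4 := fun _ => -(N : ℤ)
  set w : ℕ := 2 * N
  set S := γ.filter (fun e => ¬ IsCornerEdge γ e) with hS
  have hSγ : S ⊆ γ := Finset.filter_subset _ _
  have hSE : S ⊆ cubeEdges a w := fun e he => hγ e (hSγ he)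
  have hind : ∀ e ∈ S, ∀ e' ∈ S, e' ≠ e →
      ∀ p ∈ cubePlaqs a w, e ∈ plaqEdges p → e' ∉ plaqEdges p := by
    intro e he e' he' hne p hp hep hep'
    have hlt : p.2.1 < p.2.2 := ((Finset.mem_filter.1 hp).2).1
    have hcorner : IsCornerEdge γ e :=
      ⟨hSγ he, e', hSγ he', hne, p, hlt, hep, hep'⟩
    exact (Finset.mem_filter.1 he).2 hcorner
  have hZ : (0:ℝ) < ∑ σ : Config a w, Real.exp (β * energy a w σ) := by
    have : Nonempty (Config a w) := ⟨fun _ => true⟩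
    exact Finset.sum_pos (fun σ _ => Real.exp_pos _) Finset.univ_nonempty
  rw [integral_gibbsMeasureN N β (wilsonB_measurable γ)]
  have hrw : ∀ σ : Config a w, wilsonB γ (extBool a w σ) * Real.exp (β * energy a w σ) =
      wilson γ (extSpin a w σ) * Real.exp (β * energy a w σ) := fun σ => by
    rw [wilsonB_extBool]
  rw [Finset.sum_congr rfl fun σ _ => hrw σ, abs_mul, abs_inv, abs_of_pos hZ]
  rw [inv_mul_le_iff₀ hZ]
  calc |∑ σ : Config a w, wilson γ (extSpin a w σ) * Real.exp (β * energy a w σ)|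
      ≤ ((1 - Real.exp (-12 * β)) / (1 + Real.exp (-12 * β))) ^ S.card *
        ∑ σ : Config a w, Real.exp (β * energy a w σ) :=
        core_bound a w β hβ γ S hSγ hSE hind
    _ = (∑ σ : Config a w, Real.exp (β * energy a w σ)) *
        ((1 - Real.exp (-12 * β)) / (1 + Real.exp (-12 * β))) ^ S.card := by ring

lemma t_le_exp (β : ℝ) (hβ : 0 ≤ β) :
    (1 - Real.exp (-12 * β)) / (1 + Real.exp (-12 * β)) ≤ Real.exp (-Real.exp (-12 * β)) := by
  set q := Real.exp (-12 * β) with hq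
  have hq0 : 0 < q := Real.exp_pos _
  have hq1 : q ≤ 1 := by
    rw [hq, show (1:ℝ) = Real.exp 0 from Real.exp_zero.symm]
    exact Real.exp_le_exp.2 (by nlinarith)
  calc (1 - q) / (1 + q) ≤ 1 - q := by
        rw [div_le_iff₀ (by linarith)]
        nlinarith
    _ ≤ Real.exp (-q) := by linarith [Real.add_one_le_exp (-q)]
end Final


/-- **Lemma 7.2 (Wilson loop expectation: long loops).**
There are `β₀ > 0` and a universal constant `C > 0` such that the following holds whenever
`β ≥ β₀`.  Let `μ_β` be any subsequential weak limit of the finite-volume Ising lattice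
gauge measures.  For every nonempty generalized loop `γ` with `ℓ` edges, of which `ℓ₀` are
corner edges, `|μ_β(W_γ)| ≤ e^{−C(ℓ−ℓ₀)e^{−12β}}`. -/
theorem wilson_loop_long_loops :
    ∃ β₀ C : ℝ, 0 < β₀ ∧ 0 < C ∧
      ∀ β : ℝ, β₀ ≤ β →
      ∀ μ : MeasureTheory.Measure (Edge → Bool), IsGibbsLimit β μ →
      ∀ γ : Finset Edge, IsGenLoop γ →
        |∫ x, wilsonB γ x ∂μ| ≤
          Real.exp (-C * ((γ.card : ℝ) - (cornerCount γ : ℝ)) * Real.exp (-12 * β)) := by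
  classical
  refine ⟨1, 1, one_pos, one_pos, fun β hβ μ hμ γ hγ => ?_⟩
  have hβ0 : (0:ℝ) ≤ β := le_trans zero_le_one hβ
  obtain ⟨hprob, φ, hφ, hconv⟩ := hμ
  obtain ⟨N₀, hN₀⟩ := exists_cube_contain γ
  set q := Real.exp (-12 * β) with hq
  set m := (γ.filter (fun e => ¬ IsCornerEdge γ e)).card with hm
  have hbound : ∀ k : ℕ, N₀ ≤ k →
      |∫ x, wilsonB γ x ∂gibbsMeasureN (φ k) β| ≤
        Real.exp (-1 * ((γ.card : ℝ) - (cornerCount γ : ℝ)) * q) := by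
    intro k hk
    have hφk : N₀ ≤ φ k := le_trans hk (StrictMono.le_apply hφ)
    have h1 := boundN β hβ0 γ (φ k) (hN₀ (φ k) hφk)
    refine le_trans h1 ?_
    have ht0 : (0:ℝ) ≤ (1 - q) / (1 + q) := by
      have hq0 : 0 < q := Real.exp_pos _
      have hq1 : q ≤ 1 := by
        rw [hq, show (1:ℝ) = Real.exp 0 from Real.exp_zero.symm]
        exact Real.exp_le_exp.2 (by nlinarith)
      exact div_nonneg (by linarith) (by linarith)
    calc ((1 - q) / (1 + q)) ^ m ≤ (Real.exp (-q)) ^ m :=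
          pow_le_pow_left₀ ht0 (t_le_exp β hβ0) m
      _ = Real.exp ((m : ℝ) * (-q)) := by rw [← Real.exp_nat_mul]
      _ = Real.exp (-1 * ((γ.card : ℝ) - (cornerCount γ : ℝ)) * q) := by
          rw [hm, card_noncorner]
          ring_nf
  have htend := (hconv (wilsonB γ) (wilsonB_continuous γ)).abs
  refine le_of_tendsto htend ?_
  filter_upwards [Filter.eventually_ge_atTop N₀] with k hk
  exact hbound k hk
end

section
/- For any spin configuration σ on the edges of ℤ⁴, the set of negative plaquettes of σ can be partitioned into vortices; that is, the set of negative plaquettes is a disjoint union of surfaces, each of whose dual surfaces is closed and connected. -/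
/-! ### Auxiliary machinery for the vortex decomposition -/

/-- Parity bit of a plaquette: `true` iff the plaquette is negative. -/
def negBit (x : Edge → Bool) (p : Plaq) : Bool :=
  (((x (p.1, p.2.1)).xor (x (p.1, p.2.2))).xor (x (p.1 + unitVec p.2.1, p.2.2))).xor
    (x (p.1 + unitVec p.2.2, p.2.1))

lemma negPlaqs_iff (x : Edge → Bool) (p : Plaq) :
    p ∈ negPlaqs x ↔ p.2.1 < p.2.2 ∧ negBit x p = true := by
  unfold negPlaqs
  rcases h1 : x (p.1, p.2.1) <;> rcases h2 : x (p.1, p.2.2) <;>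
    rcases h3 : x (p.1 + unitVec p.2.1, p.2.2) <;> rcases h4 : x (p.1 + unitVec p.2.2, p.2.1) <;>
    simp [boolSpin, negBit, plaqSpin, h1, h2, h3, h4] <;> norm_num

lemma cube6 : ∀ (t1 t2 t3 t4 t5 t6 t7 t8 t9 t10 t11 t12 : Bool),
    Even (List.countP (fun b => b)
      [((t1.xor t2).xor t3).xor t4, ((t5.xor t6).xor t7).xor t8,
       ((t1.xor t9).xor t10).xor t5, ((t4.xor t11).xor t12).xor t8,
       ((t2.xor t9).xor t11).xor t6, ((t3.xor t10).xor t12).xor t7]) := by decide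

/-- The six faces of the 3-cell with corner `z` spanned by directions `a`, `b`, `c`. -/
def cubeFaces (z : V4) (a b c : Fin 4) : List Plaq :=
  [(z, a, b), (z + unitVec c, a, b), (z, a, c), (z + unitVec b, a, c),
   (z, b, c), (z + unitVec a, b, c)]

lemma cube_parity_gen (x : Edge → Bool) (z : V4) (a b c : Fin 4) :
    Even (List.countP (negBit x) (cubeFaces z a b c)) := by
  rw [show List.countP (negBit x) (cubeFaces z a b c)
      = List.countP (fun b => b) (List.map (negBit x) (cubeFaces z a b c)) from
      (List.countP_map).symm]
  simp only [cubeFaces, List.map_cons, List.map_nil, negBit]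
  rw [show z + unitVec c + unitVec a = z + unitVec a + unitVec c from by ring,
      show z + unitVec c + unitVec b = z + unitVec b + unitVec c from by ring,
      show z + unitVec b + unitVec a = z + unitVec a + unitVec b from by ring]
  exact cube6 (x (z, a)) (x (z, b)) (x (z + unitVec a, b)) (x (z + unitVec b, a))
    (x (z + unitVec c, a)) (x (z + unitVec c, b)) (x (z + unitVec a + unitVec c, b))
    (x (z + unitVec b + unitVec c, a)) (x (z, c)) (x (z + unitVec a, c))
    (x (z + unitVec b, c)) (x (z + unitVec a + unitVec b, c))

lemma uvne (d : Fin 4) : unitVec d ≠ 0 := by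
  intro h
  have := congrFun h d
  simp [unitVec] at this

lemma vne (z : V4) (d : Fin 4) : (z = z + unitVec d) = False := by
  simp only [eq_iff_iff, iff_false]
  intro h
  have := congrFun h d
  simp [unitVec] at this

lemma vne' (z : V4) (d : Fin 4) : (z + unitVec d = z) = False := by
  simp only [eq_iff_iff, iff_false]
  intro h
  have := congrFun h d
  simp [unitVec] at this

lemma cubeFaces_nodup (z : V4) (a b c : Fin 4) (hab : a ≠ b) (_hac : a ≠ c) (hbc : b ≠ c) :
    (cubeFaces z a b c).Nodup := by
  simp [cubeFaces, Prod.ext_iff, vne, vne', hab, _hac, hbc, hab.symm, _hac.symm, hbc.symm, uvne]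

def oDirs : Fin 4 → Fin 4 × Fin 4 × Fin 4
  | 0 => (1, 2, 3) | 1 => (0, 2, 3) | 2 => (0, 1, 3) | 3 => (0, 1, 2)

/-- The six plaquettes `p` (with increasing directions) such that the dual plaquette of `p`
contains the dual edge `(y, m)`: the faces of a 3-cell. -/
def faces (y : V4) (m : Fin 4) : List Plaq :=
  cubeFaces (y + unitVec m) (oDirs m).1 (oDirs m).2.1 (oDirs m).2.2

lemma faces_parity (x : Edge → Bool) (y : V4) (m : Fin 4) :
    Even (List.countP (negBit x) (faces y m)) := cube_parity_gen _ _ _ _ _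

lemma faces_nodup (y : V4) (m : Fin 4) : (faces y m).Nodup := by
  fin_cases m <;> exact cubeFaces_nodup _ _ _ _ (by decide) (by decide) (by decide)

lemma faces_lt (y : V4) (m : Fin 4) (p : Plaq) (hp : p ∈ faces y m) : p.2.1 < p.2.2 := by
  fin_cases m <;>
    simp only [faces, cubeFaces, oDirs, List.mem_cons, List.not_mem_nil, or_false] at hp <;>
    rcases hp with rfl | rfl | rfl | rfl | rfl | rfl <;> exact Nat.lt_of_sub_eq_succ rfl

lemma dp01 (X : V4) : dualPlaq (X,0,1) = (X - unitVec 2 - unitVec 3, 2, 3) := rfl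
lemma dp02 (X : V4) : dualPlaq (X,0,2) = (X - unitVec 1 - unitVec 3, 1, 3) := rfl
lemma dp03 (X : V4) : dualPlaq (X,0,3) = (X - unitVec 1 - unitVec 2, 1, 2) := rfl
lemma dp12 (X : V4) : dualPlaq (X,1,2) = (X - unitVec 0 - unitVec 3, 0, 3) := rfl
lemma dp13 (X : V4) : dualPlaq (X,1,3) = (X - unitVec 0 - unitVec 2, 0, 2) := rfl
lemma dp23 (X : V4) : dualPlaq (X,2,3) = (X - unitVec 0 - unitVec 1, 0, 1) := rfl

set_option maxHeartbeats 1600000 in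
lemma edge_mem_dual_iff (y : V4) (m : Fin 4) (p : Plaq) (hp : p.2.1 < p.2.2) :
    (y, m) ∈ plaqEdges (dualPlaq p) ↔ p ∈ faces y m := by
  obtain ⟨X, i, j⟩ := p
  simp only at hp
  fin_cases i <;> fin_cases j <;>
    first
      | exact absurd hp (by decide)
      | (fin_cases m <;>
          (simp [dp01, dp02, dp03, dp12, dp13, dp23, plaqEdges, faces, cubeFaces, oDirs,
              Prod.ext_iff];
           try (constructor <;> rintro (h|h) <;>
              first
                | (left; linear_combination h) | (right; linear_combination h)
                | (left; linear_combination -h) | (right; linear_combination -h))))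

lemma dirRec : ∀ i j i' j' : Fin 4, i < j → i' < j' →
    (compl2 i j).min' (compl2_nonempty _ _) = (compl2 i' j').min' (compl2_nonempty _ _) →
    (compl2 i j).max' (compl2_nonempty _ _) = (compl2 i' j').max' (compl2_nonempty _ _) →
    i = i' ∧ j = j' := by decide

lemma dualPlaq_inj (p q : Plaq) (hp : p.2.1 < p.2.2) (hq : q.2.1 < q.2.2)
    (h : dualPlaq p = dualPlaq q) : p = q := by
  obtain ⟨X, i, j⟩ := p; obtain ⟨Y, i', j'⟩ := q
  simp only at hp hq
  have h1 := congrArg (fun r => r.1) h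
  have h2 := congrArg (fun r => r.2.1) h
  have h3 := congrArg (fun r => r.2.2) h
  simp only [dualPlaq] at h1 h2 h3
  obtain ⟨rfl, rfl⟩ := dirRec i j i' j' hp hq h2 h3
  have hXY : X = Y := by linear_combination h1
  rw [hXY]

lemma dual_edge_even (x : Edge → Bool) (e : Edge) :
    Even {p | p ∈ negPlaqs x ∧ e ∈ plaqEdges (dualPlaq p)}.ncard := by
  obtain ⟨y, m⟩ := e
  have hset : {p | p ∈ negPlaqs x ∧ (y, m) ∈ plaqEdges (dualPlaq p)}
      = ↑(((faces y m).filter (negBit x)).toFinset) := by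
    ext p
    simp only [Set.mem_setOf_eq, List.coe_toFinset, List.mem_filter]
    constructor
    · rintro ⟨hN, he⟩
      have hh := (negPlaqs_iff x p).1 hN
      exact ⟨(edge_mem_dual_iff y m p hh.1).1 he, hh.2⟩
    · rintro ⟨hf, hb⟩
      have hlt := faces_lt y m p hf
      exact ⟨(negPlaqs_iff x p).2 ⟨hlt, hb⟩, (edge_mem_dual_iff y m p hlt).2 hf⟩
  rw [hset, Set.ncard_coe_finset,
    List.toFinset_card_of_nodup ((faces_nodup y m).filter _),
    ← List.countP_eq_length_filter]
  exact faces_parity x y m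

/-- The step relation for the vortex decomposition: both plaquettes are negative and their
dual plaquettes share an edge. -/
def VRel (x : Edge → Bool) (u v : Plaq) : Prop :=
  u ∈ negPlaqs x ∧ v ∈ negPlaqs x ∧ PlaqAdj (dualPlaq u) (dualPlaq v)

lemma VRel_symm (x : Edge → Bool) : Symmetric (VRel x) := by
  rintro u v ⟨hu, hv, hne, hint⟩
  exact ⟨hv, hu, Ne.symm hne, by rwa [Finset.inter_comm]⟩

lemma RS_symm (x : Edge → Bool) {u v : Plaq} (h : Relation.ReflTransGen (VRel x) u v) :
    Relation.ReflTransGen (VRel x) v u :=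
  (@Relation.ReflTransGen.stdSymm _ _ ⟨fun _ _ hab => VRel_symm x hab⟩).symm _ _ h

/-- The component of `p` in the negative-plaquette adjacency graph. -/
def vcomp (x : Edge → Bool) (p : Plaq) : Set Plaq :=
  {q | q ∈ negPlaqs x ∧ Relation.ReflTransGen (VRel x) p q}

lemma vcomp_subset (x : Edge → Bool) (p : Plaq) : vcomp x p ⊆ negPlaqs x := fun _ h => h.1

lemma vcomp_eq_of_mem (x : Edge → Bool) {p q r : Plaq} (h1 : r ∈ vcomp x p)
    (h2 : r ∈ vcomp x q) : vcomp x p = vcomp x q := by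
  ext s
  constructor <;> rintro ⟨hsN, hchain⟩
  · exact ⟨hsN, h2.2.trans ((RS_symm x h1.2).trans hchain)⟩
  · exact ⟨hsN, h1.2.trans ((RS_symm x h2.2).trans hchain)⟩

lemma vcomp_connected (x : Edge → Bool) (p0 : Plaq) :
    SurfConnected (dualSurf (vcomp x p0)) := by
  rintro q1 hq1 q2 hq2
  obtain ⟨u, hu, rfl⟩ := hq1
  obtain ⟨v, hv, rfl⟩ := hq2
  have huv : Relation.ReflTransGen (VRel x) u v := (RS_symm x hu.2).trans hv.2
  clear hv
  induction huv with
  | refl => exact .refl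
  | @tail b c hw step ih =>
      refine ih.tail ?_
      have hb : b ∈ vcomp x p0 := ⟨step.1, hu.2.trans hw⟩
      have hc : c ∈ vcomp x p0 := ⟨step.2.1, hu.2.trans (hw.tail step)⟩
      exact ⟨⟨b, hb, rfl⟩, ⟨c, hc, rfl⟩, step.2.2⟩

lemma vcomp_closed (x : Edge → Bool) (p0 : Plaq) :
    SurfClosed (dualSurf (vcomp x p0)) := by
  rw [SurfClosed]
  refine Set.eq_empty_iff_forall_notMem.2 fun e he => ?_
  rw [surfBdry, Set.mem_setOf_eq, ← Nat.not_even_iff_odd] at he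
  apply he
  have himg : {p | p ∈ dualSurf (vcomp x p0) ∧ e ∈ plaqEdges p}
      = dualPlaq '' {p | p ∈ vcomp x p0 ∧ e ∈ plaqEdges (dualPlaq p)} := by
    ext q
    constructor
    · rintro ⟨⟨p, hpS, rfl⟩, hqe⟩
      exact ⟨p, ⟨hpS, hqe⟩, rfl⟩
    · rintro ⟨p, ⟨hpS, hpe⟩, rfl⟩
      exact ⟨⟨p, hpS, rfl⟩, hpe⟩
  rw [himg]
  rcases Set.eq_empty_or_nonempty {p | p ∈ vcomp x p0 ∧ e ∈ plaqEdges (dualPlaq p)} with hA | hA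
  · rw [hA]
    simp
  · obtain ⟨u, hu⟩ := hA
    have hAB : {p | p ∈ vcomp x p0 ∧ e ∈ plaqEdges (dualPlaq p)}
        = {p | p ∈ negPlaqs x ∧ e ∈ plaqEdges (dualPlaq p)} := by
      ext v
      constructor
      · rintro ⟨hvS, hve⟩
        exact ⟨hvS.1, hve⟩
      · rintro ⟨hvN, hve⟩
        by_cases hdv : dualPlaq v = dualPlaq u
        · have : v = u := dualPlaq_inj v u ((negPlaqs_iff x v).1 hvN).1
            ((negPlaqs_iff x u).1 hu.1.1).1 hdv
          exact this ▸ hu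
        · refine ⟨⟨hvN, hu.1.2.tail ?_⟩, hve⟩
          exact ⟨hu.1.1, hvN, fun h => hdv h.symm,
            ⟨e, Finset.mem_inter.2 ⟨hu.2, hve⟩⟩⟩
    rw [hAB, Set.ncard_image_of_injOn fun p hp q hq h =>
      dualPlaq_inj p q ((negPlaqs_iff x p).1 hp.1).1 ((negPlaqs_iff x q).1 hq.1).1 h]
    exact dual_edge_even x e

/-- **Lemma 2.3 (Decomposition into vortices).**
For any spin configuration `σ` on the edges of `ℤ⁴`, the set of negative plaquettes of `σ`
is a disjoint union of vortices: it can be partitioned into pairwise disjoint nonempty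
surfaces, each of whose dual surfaces is closed and connected. -/
theorem negative_plaquettes_decompose_into_vortices (x : Edge → Bool) :
    ∃ 𝒱 : Set (Set Plaq),
      (∀ S ∈ 𝒱, IsVortex x S) ∧
      (∀ S ∈ 𝒱, ∀ T ∈ 𝒱, S ≠ T → Disjoint S T) ∧
      ⋃₀ 𝒱 = negPlaqs x := by
  refine ⟨vcomp x '' negPlaqs x, ?_, ?_, ?_⟩
  · rintro S ⟨p0, hp0, rfl⟩
    exact ⟨⟨p0, hp0, .refl⟩, fun p hp => hp.1, vcomp_closed x p0, vcomp_connected x p0⟩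
  · rintro S ⟨p, hp, rfl⟩ T ⟨q, hq, rfl⟩ hST
    refine Set.disjoint_left.2 fun r hrS hrT => hST ?_
    exact vcomp_eq_of_mem x hrS hrT
  · ext p
    constructor
    · rintro ⟨S, ⟨q, hq, rfl⟩, hpS⟩
      exact hpS.1
    · intro hp
      exact ⟨vcomp x p, ⟨p, hp, rfl⟩, hp, .refl⟩
end

section
/- Every generalized loop γ in ℤ⁴ is the boundary of some finite surface P. Moreover, if γ is contained in a cube B (all its edges are in B), then P can be chosen so that all its plaquettes are in B. -/
open Finset

namespace GenLoopAux

/-- staircase point: coords `< m` from `x`, coord `m` equals `t`, coords `> m` from `a`. -/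
def stair (a : V4) (m : Fin 4) (x : V4) (t : ℤ) : V4 :=
  fun k => if k < m then x k else if k = m then t else a k

/-- projection: coords `< n` from `x`, the rest from `a` (with `n : ℕ`). -/
def proj (a x : V4) (n : ℕ) : V4 := fun k => if (k : ℕ) < n then x k else a k

noncomputable def rect (a x : V4) (i m : Fin 4) : Finset Plaq :=
  if i < m then (Finset.Ico (a m) (x m)).image (fun t => (stair a m x t, i, m)) else ∅

noncomputable def surf (a : V4) (e : Edge) : Finset Plaq := Finset.univ.biUnion (rect a e.1 e.2)

noncomputable def seg (a : V4) (m : Fin 4) (x : V4) : Finset Edge :=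
  (Finset.Ico (a m) (x m)).image fun t => (stair a m x t, m)

noncomputable def bnd (P : Finset Plaq) (e : Edge) : ZMod 2 :=
  ∑ p ∈ P, if e ∈ plaqEdges p then 1 else 0

noncomputable def pathInd (a x : V4) (e : Edge) : ZMod 2 :=
  ∑ m : Fin 4, if e ∈ seg a m x then 1 else 0

lemma unitVec_apply (i k : Fin 4) : unitVec i k = if k = i then 1 else 0 := rfl

lemma add_unitVec_apply (x : V4) (i k : Fin 4) :
    (x + unitVec i) k = x k + if k = i then 1 else 0 := rfl

lemma stair_inj (a : V4) (m : Fin 4) (x : V4) {s t : ℤ} (h : stair a m x s = stair a m x t) :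
    s = t := by
  have := congrFun h m
  simpa [stair] using this

lemma stair_apply_m (a : V4) (m : Fin 4) (x : V4) (t : ℤ) : stair a m x t m = t := by
  simp [stair]

lemma stair_add_unitVec_m (a : V4) (m : Fin 4) (x : V4) (t : ℤ) :
    stair a m x t + unitVec m = stair a m x (t + 1) := by
  funext k
  by_cases h1 : k < m
  · have : k ≠ m := ne_of_lt h1
    simp [stair, add_unitVec_apply, unitVec, h1, this]
  · by_cases h2 : k = m
    · subst h2; simp [stair, add_unitVec_apply, unitVec, h1]
    · simp [stair, add_unitVec_apply, unitVec, h1, h2]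

lemma stair_add_unitVec_lt (a : V4) {i m : Fin 4} (h : i < m) (x : V4) (t : ℤ) :
    stair a m (x + unitVec i) t = stair a m x t + unitVec i := by
  funext k
  by_cases h1 : k < m
  · simp [stair, add_unitVec_apply, unitVec, h1]
  · have hki : k ≠ i := ne_of_gt (lt_of_lt_of_le h (not_lt.mp h1))
    by_cases h2 : k = m
    · subst h2; simp [stair, add_unitVec_apply, unitVec, h1, hki]
    · simp [stair, add_unitVec_apply, unitVec, h1, h2, hki]

lemma stair_eq_of_le (a : V4) {i m : Fin 4} (h : m ≤ i) (x : V4) (t : ℤ) :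
    stair a m (x + unitVec i) t = stair a m x t := by
  funext k
  by_cases h1 : k < m
  · have hki : k ≠ i := ne_of_lt (lt_of_lt_of_le h1 h)
    simp [stair, h1, add_unitVec_apply, unitVec, hki]
  · simp [stair, h1]

lemma stair_bot (a : V4) (m : Fin 4) (x : V4) : stair a m x (a m) = proj a x m.val := by
  funext k
  by_cases h1 : k < m
  · simp [stair, proj, h1, Fin.lt_def.mp h1]
  · by_cases h2 : k = m
    · subst h2; simp [stair, proj]
    · have : ¬ ((k:ℕ) < (m:ℕ)) := fun hc => h1 (Fin.lt_def.mpr hc)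
      simp [stair, proj, h1, h2, this]

lemma stair_top (a : V4) (m : Fin 4) (x : V4) : stair a m x (x m) = proj a x (m.val + 1) := by
  funext k
  by_cases h1 : k < m
  · have : (k:ℕ) < m.val + 1 := Nat.lt_succ_of_lt (Fin.lt_def.mp h1)
    simp [stair, proj, h1, this]
  · by_cases h2 : k = m
    · subst h2; simp [stair, proj]
    · have hk : ¬ ((k:ℕ) < (m:ℕ) + 1) := by
        have h3 : ¬ ((k:ℕ) < (m:ℕ)) := fun hc => h1 (Fin.lt_def.mpr hc)
        have h4 : (k:ℕ) ≠ (m:ℕ) := fun hc => h2 (Fin.ext hc)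
        omega
      simp [stair, proj, h1, h2, hk]

lemma proj_four (a x : V4) : proj a x 4 = x := by
  funext k; simp [proj, k.isLt]
lemma zmod2_all (P : ZMod 2 → Prop) [DecidablePred P] (h : P 0 ∧ P 1) : ∀ z, P z := by
  intro z; fin_cases z <;> tauto

lemma ind_or (p q : Prop) [Decidable p] [Decidable q] (h : ¬(p ∧ q)) :
    (if p ∨ q then (1:ZMod 2) else 0) = (if p then 1 else 0) + (if q then 1 else 0) := by
  by_cases hp : p <;> by_cases hq : q <;> simp_all

lemma ne_add_unitVec (z : V4) (m : Fin 4) : z ≠ z + unitVec m := by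
  intro h
  have := congrFun h m
  simp [unitVec, add_unitVec_apply] at this

lemma ind_plaqEdges (e : Edge) (z : V4) {i m : Fin 4} (him : i ≠ m) :
    ((if e ∈ plaqEdges (z,i,m) then 1 else 0 : ZMod 2)) =
      (if e = (z,i) then 1 else 0) + (if e = (z + unitVec m, i) then 1 else 0)
      + (if e = (z,m) then 1 else 0) + (if e = (z + unitVec i, m) then 1 else 0) := by
  have hmem : e ∈ plaqEdges (z,i,m) ↔
      e = (z,i) ∨ e = (z,m) ∨ e = (z + unitVec i, m) ∨ e = (z + unitVec m, i) := by
    simp [plaqEdges]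
  have h1 : (z,i) ≠ ((z,m) : Edge) := by simp [him]
  have h2 : ((z,i) : Edge) ≠ (z + unitVec i, m) := by simp [him]
  have h3 : ((z,i) : Edge) ≠ (z + unitVec m, i) := by
    simp [ne_add_unitVec z m]
  have h4 : ((z,m) : Edge) ≠ (z + unitVec i, m) := by
    simp [ne_add_unitVec z i]
  have h5 : ((z,m) : Edge) ≠ (z + unitVec m, i) := by simp [Ne.symm him]
  have h6 : ((z + unitVec i, m) : Edge) ≠ (z + unitVec m, i) := by simp [Ne.symm him]
  rw [if_congr hmem rfl rfl]
  by_cases e1 : e = (z,i) <;> by_cases e2 : e = (z,m) <;>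
    by_cases e3 : e = (z + unitVec i, m) <;> by_cases e4 : e = (z + unitVec m, i) <;>
    simp_all

lemma sum_ind_image {s : Finset ℤ} {g : ℤ → Edge} (hg : Set.InjOn g s) (e : Edge) :
    ∑ t ∈ s, (if e = g t then (1:ZMod 2) else 0) = if e ∈ s.image g then 1 else 0 := by
  by_cases he : e ∈ s.image g
  · obtain ⟨t0, ht0, rfl⟩ := Finset.mem_image.mp he
    rw [if_pos he, Finset.sum_eq_single t0]
    · simp
    · intro t ht hne
      have : g t0 ≠ g t := fun hc => hne (hg ht ht0 hc.symm)
      simp [this]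
    · intro h; exact absurd ht0 h
  · rw [if_neg he, Finset.sum_eq_zero]
    intro t ht
    have : e ≠ g t := fun hc => he (Finset.mem_image.mpr ⟨t, ht, hc.symm⟩)
    simp [this]

lemma telescope {l u : ℤ} (h : l ≤ u) (f : ℤ → ZMod 2) :
    (∑ t ∈ Finset.Ico l u, f t) + ∑ t ∈ Finset.Ico l u, f (t+1) = f l + f u := by
  have hmap : ∑ t ∈ Finset.Ico l u, f (t+1) = ∑ t ∈ Finset.Ico (l+1) (u+1), f t := by
    rw [← Finset.map_add_right_Ico, Finset.sum_map]
    rfl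
  rcases eq_or_lt_of_le h with rfl | hlt
  · simp
    have : ∀ z : ZMod 2, 0 = z + z := by decide
    exact this (f l)
  · have hins1 : Finset.Ico l (u+1) = insert u (Finset.Ico l u) := by
      ext t; simp [Finset.mem_Ico, Finset.mem_insert]; omega
    have hins2 : Finset.Ico l (u+1) = insert l (Finset.Ico (l+1) (u+1)) := by
      ext t; simp [Finset.mem_Ico, Finset.mem_insert]; omega
    have h1 : ∑ t ∈ Finset.Ico l (u+1), f t = (∑ t ∈ Finset.Ico l u, f t) + f u := by
      rw [hins1, Finset.sum_insert (by simp [Finset.mem_Ico])]; ring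
    have h2 : ∑ t ∈ Finset.Ico l (u+1), f t = f l + ∑ t ∈ Finset.Ico (l+1) (u+1), f t := by
      rw [hins2, Finset.sum_insert (by simp [Finset.mem_Ico])]
    have key : (∑ t ∈ Finset.Ico l u, f t) + f u
        = f l + ∑ t ∈ Finset.Ico (l+1) (u+1), f t := by rw [← h1, h2]
    rw [hmap]
    revert key
    generalize (∑ t ∈ Finset.Ico l u, f t) = A
    generalize (∑ t ∈ Finset.Ico (l+1) (u+1), f t) = D
    generalize f l = L; generalize f u = U
    revert A D L U; decide

lemma apply_ne (x : V4) {i m : Fin 4} (h : i ≠ m) : (x + unitVec i) m = x m := by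
  simp [add_unitVec_apply, unitVec, Ne.symm h]

lemma bnd_rect (a x : V4) {i m : Fin 4} (him : i < m) (ham : a m ≤ x m) (e : Edge) :
    bnd (rect a x i m) e =
      (if e = (proj a x m.val, i) then 1 else 0)
      + (if e = (proj a x (m.val+1), i) then 1 else 0)
      + (if e ∈ seg a m x then 1 else 0)
      + (if e ∈ seg a m (x + unitVec i) then 1 else 0) := by
  have hinj : Set.InjOn (fun t => ((stair a m x t, i, m) : Plaq)) (Finset.Ico (a m) (x m)) := by
    intro s _ t _ hst
    exact stair_inj a m x (congrArg Prod.fst hst)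
  rw [bnd, rect, if_pos him, Finset.sum_image (fun s hs t ht hst => hinj hs ht hst)]
  have expand : ∀ t, (if e ∈ plaqEdges (stair a m x t, i, m) then (1:ZMod 2) else 0)
      = ((if e = (stair a m x t, i) then 1 else 0) + (if e = (stair a m x (t+1), i) then 1 else 0))
      + ((if e = (stair a m x t, m) then 1 else 0)
        + (if e = (stair a m (x + unitVec i) t, m) then 1 else 0)) := by
    intro t
    rw [ind_plaqEdges e (stair a m x t) (ne_of_lt him), stair_add_unitVec_m,
      stair_add_unitVec_lt a him]
    ring
  rw [Finset.sum_congr rfl (fun t _ => expand t)]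
  simp only [Finset.sum_add_distrib]
  have T12 : (∑ t ∈ Finset.Ico (a m) (x m), if e = (stair a m x t, i) then (1:ZMod 2) else 0)
      + ∑ t ∈ Finset.Ico (a m) (x m), (if e = (stair a m x (t+1), i) then (1:ZMod 2) else 0)
      = (if e = (proj a x m.val, i) then 1 else 0)
        + (if e = (proj a x (m.val+1), i) then 1 else 0) := by
    rw [telescope ham (fun t => if e = (stair a m x t, i) then (1:ZMod 2) else 0),
      stair_bot, stair_top]
  have hinj3 : Set.InjOn (fun t => ((stair a m x t, m) : Edge)) (Finset.Ico (a m) (x m)) := by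
    intro s _ t _ hst
    exact stair_inj a m x (congrArg Prod.fst hst)
  have T3 : (∑ t ∈ Finset.Ico (a m) (x m), if e = (stair a m x t, m) then (1:ZMod 2) else 0)
      = if e ∈ seg a m x then 1 else 0 := by
    rw [sum_ind_image hinj3 e]; rfl
  have hinj4 : Set.InjOn (fun t => ((stair a m (x + unitVec i) t, m) : Edge))
      (Finset.Ico (a m) (x m)) := by
    intro s _ t _ hst
    exact stair_inj a m (x + unitVec i) (congrArg Prod.fst hst)
  have T4 : (∑ t ∈ Finset.Ico (a m) (x m),
        if e = (stair a m (x + unitVec i) t, m) then (1:ZMod 2) else 0)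
      = if e ∈ seg a m (x + unitVec i) then 1 else 0 := by
    rw [sum_ind_image hinj4 e, seg, apply_ne x (ne_of_lt him)]
  rw [T12, T3, T4]
  ring
lemma rect_snd {a x : V4} {i m : Fin 4} {p : Plaq} (hp : p ∈ rect a x i m) : p.2.2 = m := by
  rw [rect] at hp
  split at hp
  · obtain ⟨t, _, rfl⟩ := Finset.mem_image.mp hp; rfl
  · exact absurd hp (Finset.notMem_empty p)

lemma rect_lt {a x : V4} {i m : Fin 4} {p : Plaq} (hp : p ∈ rect a x i m) : p.2.1 < p.2.2 := by
  rw [rect] at hp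
  split at hp
  · obtain ⟨t, _, rfl⟩ := Finset.mem_image.mp hp; assumption
  · exact absurd hp (Finset.notMem_empty p)

lemma bnd_surf_sum (a : V4) (en : Edge) (e : Edge) :
    bnd (surf a en) e = ∑ m : Fin 4, bnd (rect a en.1 en.2 m) e := by
  rw [surf, bnd, Finset.sum_biUnion]
  · rfl
  · intro m _ m' _ hne
    refine Finset.disjoint_left.mpr fun p hp hp' => hne ?_
    rw [← rect_snd hp, rect_snd hp']

lemma bnd_rect_empty (a x : V4) {i m : Fin 4} (him : ¬ i < m) (e : Edge) :
    bnd (rect a x i m) e = 0 := by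
  rw [rect, if_neg him, bnd, Finset.sum_empty]

lemma seg_eq_of_lt (a : V4) {m i : Fin 4} (h : m < i) (x : V4) :
    seg a m (x + unitVec i) = seg a m x := by
  rw [seg, seg, apply_ne x (ne_of_gt h)]
  apply Finset.image_congr
  intro t _
  simp only
  rw [stair_eq_of_le a (le_of_lt h)]

lemma seg_i_ind (a x : V4) (i : Fin 4) (hai : a i ≤ x i) (e : Edge) :
    ((if e ∈ seg a i (x + unitVec i) then 1 else 0 : ZMod 2))
      = (if e ∈ seg a i x then 1 else 0) + (if e = (proj a x (i.val+1), i) then 1 else 0) := by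
  have hx : (x + unitVec i) i = x i + 1 := by simp [add_unitVec_apply, unitVec]
  have hIco : Finset.Ico (a i) (x i + 1) = insert (x i) (Finset.Ico (a i) (x i)) := by
    ext t; simp [Finset.mem_Ico, Finset.mem_insert]; omega
  have hstair : ∀ t, stair a i (x + unitVec i) t = stair a i x t := stair_eq_of_le a le_rfl x
  have hseg : seg a i (x + unitVec i) = insert (proj a x (i.val+1), i) (seg a i x) := by
    rw [seg, hx, hIco, Finset.image_insert, seg]
    congr 1
    · rw [hstair, stair_top]
    · apply Finset.image_congr; intro t _; simp only; rw [hstair]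
  have hnotin : ((proj a x (i.val+1), i) : Edge) ∉ seg a i x := by
    rw [seg, Finset.mem_image]
    rintro ⟨t, ht, hteq⟩
    have h1 : stair a i x t i = proj a x (i.val+1) i := by
      rw [show stair a i x t = proj a x (i.val+1) from congrArg Prod.fst hteq]
    rw [stair_apply_m] at h1
    have h2 : proj a x (i.val+1) i = x i := by simp [proj]
    rw [Finset.mem_Ico] at ht
    omega
  rw [hseg]
  by_cases he1 : e = (proj a x (i.val+1), i) <;> by_cases he2 : e ∈ seg a i x <;>
    simp_all

lemma bnd_surf0 (a x : V4) (ha : ∀ m, a m ≤ x m) (e : Edge) :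
    bnd (surf a (x, (0:Fin 4))) e = (if e = (x, (0:Fin 4)) then 1 else 0)
      + pathInd a x e + pathInd a (x + unitVec 0) e := by
  rw [bnd_surf_sum, pathInd, pathInd]
  rw [Fin.sum_univ_four, Fin.sum_univ_four, Fin.sum_univ_four]
  show bnd (rect a x 0 0) e + bnd (rect a x 0 1) e + bnd (rect a x 0 2) e
      + bnd (rect a x 0 3) e = _
  rw [bnd_rect_empty a x (by decide) e,
    bnd_rect a x (show (0:Fin 4) < 1 by decide) (ha 1) e,
    bnd_rect a x (show (0:Fin 4) < 2 by decide) (ha 2) e,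
    bnd_rect a x (show (0:Fin 4) < 3 by decide) (ha 3) e,
    seg_i_ind a x 0 (ha 0) e]
  norm_num [show ((3:Fin 4):ℕ) = 3 from rfl, show ((2:Fin 4):ℕ) = 2 from rfl,
    show ((1:Fin 4):ℕ) = 1 from rfl, proj_four]
  ring_nf
  simp [show (2:ZMod 2) = 0 by rfl]

lemma bnd_surf1 (a x : V4) (ha : ∀ m, a m ≤ x m) (e : Edge) :
    bnd (surf a (x, (1:Fin 4))) e = (if e = (x, (1:Fin 4)) then 1 else 0)
      + pathInd a x e + pathInd a (x + unitVec 1) e := by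
  rw [bnd_surf_sum, pathInd, pathInd]
  rw [Fin.sum_univ_four, Fin.sum_univ_four, Fin.sum_univ_four]
  show bnd (rect a x 1 0) e + bnd (rect a x 1 1) e + bnd (rect a x 1 2) e
      + bnd (rect a x 1 3) e = _
  rw [bnd_rect_empty a x (by decide) e, bnd_rect_empty a x (by decide) e,
    bnd_rect a x (show (1:Fin 4) < 2 by decide) (ha 2) e,
    bnd_rect a x (show (1:Fin 4) < 3 by decide) (ha 3) e,
    seg_i_ind a x 1 (ha 1) e,
    seg_eq_of_lt a (show (0:Fin 4) < 1 by decide) x]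
  norm_num [show ((3:Fin 4):ℕ) = 3 from rfl, show ((2:Fin 4):ℕ) = 2 from rfl,
    show ((1:Fin 4):ℕ) = 1 from rfl, proj_four]
  ring_nf
  simp [show (2:ZMod 2) = 0 by rfl]

lemma bnd_surf2 (a x : V4) (ha : ∀ m, a m ≤ x m) (e : Edge) :
    bnd (surf a (x, (2:Fin 4))) e = (if e = (x, (2:Fin 4)) then 1 else 0)
      + pathInd a x e + pathInd a (x + unitVec 2) e := by
  rw [bnd_surf_sum, pathInd, pathInd]
  rw [Fin.sum_univ_four, Fin.sum_univ_four, Fin.sum_univ_four]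
  show bnd (rect a x 2 0) e + bnd (rect a x 2 1) e + bnd (rect a x 2 2) e
      + bnd (rect a x 2 3) e = _
  rw [bnd_rect_empty a x (by decide) e, bnd_rect_empty a x (by decide) e,
    bnd_rect_empty a x (by decide) e,
    bnd_rect a x (show (2:Fin 4) < 3 by decide) (ha 3) e,
    seg_i_ind a x 2 (ha 2) e,
    seg_eq_of_lt a (show (0:Fin 4) < 2 by decide) x,
    seg_eq_of_lt a (show (1:Fin 4) < 2 by decide) x]
  norm_num [show ((3:Fin 4):ℕ) = 3 from rfl, show ((2:Fin 4):ℕ) = 2 from rfl,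
    show ((1:Fin 4):ℕ) = 1 from rfl, proj_four]
  ring_nf
  simp [show (2:ZMod 2) = 0 by rfl]

lemma bnd_surf3 (a x : V4) (ha : ∀ m, a m ≤ x m) (e : Edge) :
    bnd (surf a (x, (3:Fin 4))) e = (if e = (x, (3:Fin 4)) then 1 else 0)
      + pathInd a x e + pathInd a (x + unitVec 3) e := by
  rw [bnd_surf_sum, pathInd, pathInd]
  rw [Fin.sum_univ_four, Fin.sum_univ_four, Fin.sum_univ_four]
  show bnd (rect a x 3 0) e + bnd (rect a x 3 1) e + bnd (rect a x 3 2) e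
      + bnd (rect a x 3 3) e = _
  rw [bnd_rect_empty a x (by decide) e, bnd_rect_empty a x (by decide) e,
    bnd_rect_empty a x (by decide) e, bnd_rect_empty a x (by decide) e,
    seg_i_ind a x 3 (ha 3) e,
    seg_eq_of_lt a (show (0:Fin 4) < 3 by decide) x,
    seg_eq_of_lt a (show (1:Fin 4) < 3 by decide) x,
    seg_eq_of_lt a (show (2:Fin 4) < 3 by decide) x]
  norm_num [show ((3:Fin 4):ℕ) = 3 from rfl, proj_four]
  ring_nf
  simp [show (2:ZMod 2) = 0 by rfl]

lemma bnd_surf (a : V4) (en : Edge) (ha : ∀ m, a m ≤ en.1 m) (e : Edge) :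
    bnd (surf a en) e = (if e = en then 1 else 0)
      + pathInd a en.1 e + pathInd a (en.1 + unitVec en.2) e := by
  obtain ⟨x, i⟩ := en
  fin_cases i
  · exact bnd_surf0 a x ha e
  · exact bnd_surf1 a x ha e
  · exact bnd_surf2 a x ha e
  · exact bnd_surf3 a x ha e

lemma zmod2_ne_one {z : ZMod 2} (h : z ≠ 1) : z = 0 := by
  revert h; revert z; decide

lemma odd_iff_zmod (n : ℕ) : Odd n ↔ (n : ZMod 2) = 1 := by
  rw [Nat.odd_iff, ← ZMod.natCast_mod]
  rcases Nat.mod_two_eq_zero_or_one n with h | h <;> rw [h] <;> simp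

lemma even_cast_zmod {n : ℕ} (h : Even n) : (n : ZMod 2) = 0 := by
  rw [ZMod.natCast_eq_zero_iff]; exact h.two_dvd

lemma master (γ : Finset Edge)
    (hev : ∀ v : V4, Even (γ.filter (fun e => v ∈ edgeVerts e)).card)
    (a : V4) (ha : ∀ e ∈ γ, ∀ m, a m ≤ e.1 m) :
    ∃ P : Finset Plaq, P ⊆ γ.biUnion (surf a) ∧
      ∀ e : Edge, e ∈ γ ↔ Odd ((P.filter fun p => e ∈ plaqEdges p).card) := by
  classical
  set U := γ.biUnion (surf a) with hU
  set w : Plaq → ZMod 2 := fun p => ∑ e' ∈ γ, if p ∈ surf a e' then (1:ZMod 2) else 0 with hw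
  set P := U.filter (fun p => w p = 1) with hP
  refine ⟨P, Finset.filter_subset _ _, ?_⟩
  intro e
  rw [odd_iff_zmod]
  have hcard : (((P.filter fun p => e ∈ plaqEdges p).card : ℕ) : ZMod 2) = bnd P e := by
    rw [bnd, Finset.sum_boole]
  have key : bnd P e = if e ∈ γ then 1 else 0 := by
    have step1 : bnd P e = ∑ p ∈ U, if w p = 1 then (if e ∈ plaqEdges p then (1:ZMod 2) else 0) else 0 := by
      rw [bnd, hP, Finset.sum_filter]
    have step2 : ∀ p, (if w p = 1 then (if e ∈ plaqEdges p then (1:ZMod 2) else 0) else 0)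
        = w p * (if e ∈ plaqEdges p then 1 else 0) := by
      intro p
      by_cases h : w p = 1
      · rw [if_pos h, h, one_mul]
      · rw [if_neg h, zmod2_ne_one h, zero_mul]
    have step3 : bnd P e
        = ∑ e' ∈ γ, ∑ p ∈ U, (if p ∈ surf a e' then (1:ZMod 2) else 0)
            * (if e ∈ plaqEdges p then 1 else 0) := by
      rw [step1, Finset.sum_congr rfl fun p _ => step2 p]
      simp only [hw, Finset.sum_mul]
      rw [Finset.sum_comm]
    have step5 : ∀ e' ∈ γ, (∑ p ∈ U, (if p ∈ surf a e' then (1:ZMod 2) else 0)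
        * (if e ∈ plaqEdges p then 1 else 0)) = bnd (surf a e') e := by
      intro e' he'
      rw [bnd]
      have hsub : surf a e' ⊆ U := Finset.subset_biUnion_of_mem (surf a) he'
      calc ∑ p ∈ U, (if p ∈ surf a e' then (1:ZMod 2) else 0) * (if e ∈ plaqEdges p then 1 else 0)
          = ∑ p ∈ U, (if p ∈ surf a e' then (if e ∈ plaqEdges p then (1:ZMod 2) else 0) else 0) := by
            apply Finset.sum_congr rfl; intro p _
            by_cases h : p ∈ surf a e' <;> simp [h]
        _ = ∑ p ∈ U ∩ surf a e', (if e ∈ plaqEdges p then (1:ZMod 2) else 0) := by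
            rw [Finset.sum_ite_mem]
        _ = ∑ p ∈ surf a e', (if e ∈ plaqEdges p then (1:ZMod 2) else 0) := by
            rw [Finset.inter_eq_right.mpr hsub]
    have step6 : bnd P e = ∑ e' ∈ γ, ((if e = e' then (1:ZMod 2) else 0)
        + pathInd a e'.1 e + pathInd a (e'.1 + unitVec e'.2) e) := by
      rw [step3, Finset.sum_congr rfl fun e' he' => (step5 e' he').trans (bnd_surf a e' (ha e' he') e)]
    have hdelta : ∑ e' ∈ γ, (if e = e' then (1:ZMod 2) else 0) = if e ∈ γ then 1 else 0 :=
      Finset.sum_ite_eq γ e (fun _ => (1:ZMod 2))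
    have hcancel : ∑ e' ∈ γ, (pathInd a e'.1 e + pathInd a (e'.1 + unitVec e'.2) e) = 0 := by
      set f : V4 → ZMod 2 := fun v => pathInd a v e with hf
      set Vs := γ.biUnion edgeVerts with hVs
      have pair : ∀ e' : Edge, pathInd a e'.1 e + pathInd a (e'.1 + unitVec e'.2) e
          = ∑ v ∈ edgeVerts e', f v := by
        intro e'
        rw [edgeVerts, Finset.sum_pair (ne_add_unitVec e'.1 e'.2)]
      rw [Finset.sum_congr rfl fun e' _ => pair e']
      have expand : ∀ e' ∈ γ, ∑ v ∈ edgeVerts e', f v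
          = ∑ v ∈ Vs, (if v ∈ edgeVerts e' then (1:ZMod 2) else 0) * f v := by
        intro e' he'
        have hsub : edgeVerts e' ⊆ Vs := Finset.subset_biUnion_of_mem edgeVerts he'
        calc ∑ v ∈ edgeVerts e', f v
            = ∑ v ∈ Vs ∩ edgeVerts e', f v := by rw [Finset.inter_eq_right.mpr hsub]
          _ = ∑ v ∈ Vs, (if v ∈ edgeVerts e' then f v else 0) := by rw [Finset.sum_ite_mem]
          _ = ∑ v ∈ Vs, (if v ∈ edgeVerts e' then (1:ZMod 2) else 0) * f v := by
              apply Finset.sum_congr rfl; intro v _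
              by_cases h : v ∈ edgeVerts e' <;> simp [h]
      rw [Finset.sum_congr rfl expand, Finset.sum_comm]
      apply Finset.sum_eq_zero
      intro v _
      rw [← Finset.sum_mul, Finset.sum_boole]
      have : ((γ.filter fun e' => v ∈ edgeVerts e').card : ZMod 2) = 0 := even_cast_zmod (hev v)
      norm_cast at this ⊢
      rw [this, zero_mul]
    rw [step6]
    rw [Finset.sum_add_distrib, Finset.sum_add_distrib, hdelta, add_assoc,
      ← Finset.sum_add_distrib, hcancel, add_zero]
  rw [hcard, key]
  by_cases h : e ∈ γ <;> simp [h]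

lemma mem_cubeV_iff {a : V4} {w : ℕ} {v : V4} :
    v ∈ cubeV a w ↔ ∀ k, a k ≤ v k ∧ v k ≤ a k + w := by
  rw [cubeV, Fintype.mem_piFinset]
  apply forall_congr'
  intro k
  rw [Finset.mem_Icc]

lemma cubeEdge_props {a : V4} {w : ℕ} {e : Edge} (he : e ∈ cubeEdges a w) :
    e.1 ∈ cubeV a w ∧ e.1 + unitVec e.2 ∈ cubeV a w := by
  rw [cubeEdges, Finset.mem_filter, Finset.mem_product] at he
  exact ⟨he.1.1, he.2⟩

lemma stair_mem_cubeV {a x : V4} {w : ℕ} (hx : x ∈ cubeV a w) {m : Fin 4} {t : ℤ}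
    (h1 : a m ≤ t) (h2 : t ≤ x m) : stair a m x t ∈ cubeV a w := by
  rw [mem_cubeV_iff] at hx ⊢
  intro k
  by_cases hk1 : k < m
  · simpa [stair, hk1] using hx k
  · by_cases hk2 : k = m
    · subst hk2
      have := hx k
      simp only [stair, hk1, if_false, if_neg, if_pos rfl]
      omega
    · have := hx k
      simp only [stair, hk1, hk2, if_false]
      omega

lemma surf_subset_cubePlaqs {a : V4} {w : ℕ} {e' : Edge} (he : e' ∈ cubeEdges a w) :
    surf a e' ⊆ cubePlaqs a w := by
  intro p hp
  rw [surf, Finset.mem_biUnion] at hp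
  obtain ⟨m, _, hp⟩ := hp
  rw [rect] at hp
  by_cases him : e'.2 < m
  swap
  · rw [if_neg him] at hp; exact absurd hp (Finset.notMem_empty p)
  rw [if_pos him] at hp
  obtain ⟨t, ht, rfl⟩ := Finset.mem_image.mp hp
  rw [Finset.mem_Ico] at ht
  obtain ⟨hx, hy⟩ := cubeEdge_props he
  have hym : (e'.1 + unitVec e'.2) m = e'.1 m := apply_ne e'.1 (ne_of_lt him)
  have hz : stair a m e'.1 t ∈ cubeV a w := stair_mem_cubeV hx ht.1 (le_of_lt ht.2)
  have hzm : stair a m e'.1 t + unitVec m ∈ cubeV a w := by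
    rw [stair_add_unitVec_m]
    exact stair_mem_cubeV hx (by omega) (by omega)
  have hzi : stair a m e'.1 t + unitVec e'.2 ∈ cubeV a w := by
    rw [← stair_add_unitVec_lt a him]
    exact stair_mem_cubeV hy (by omega) (by omega)
  have hzim : stair a m e'.1 t + unitVec e'.2 + unitVec m ∈ cubeV a w := by
    rw [← stair_add_unitVec_lt a him, stair_add_unitVec_m]
    exact stair_mem_cubeV hy (by omega) (by omega)
  rw [cubePlaqs, Finset.mem_filter, Finset.mem_product]
  refine ⟨⟨hz, by simp⟩, him, ?_⟩
  intro v hv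
  have hv' : v = stair a m e'.1 t ∨ v = stair a m e'.1 t + unitVec e'.2
      ∨ v = stair a m e'.1 t + unitVec m
      ∨ v = stair a m e'.1 t + unitVec e'.2 + unitVec m := by
    simpa [plaqVerts] using hv
  rcases hv' with rfl | rfl | rfl | rfl
  · exact hz
  · exact hzi
  · exact hzm
  · exact hzim

end GenLoopAux
/-- **Lemma 2.2 (Generalized loops bound surfaces).**
Every generalized loop `γ` in `ℤ⁴` is the boundary of some finite surface `P` (i.e. `γ` is
exactly the set of edges contained in an odd number of plaquettes of `P`).  Moreover, if
`γ` is contained in a cube `B`, then `P` can be chosen with all its plaquettes in `B`. -/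
theorem genloop_is_boundary_of_surface (γ : Finset Edge) (hγ : IsGenLoop γ) :
    (∃ P : Finset Plaq, (∀ p ∈ P, p.2.1 < p.2.2) ∧
      ∀ e : Edge, e ∈ γ ↔ Odd ((P.filter fun p => e ∈ plaqEdges p).card)) ∧
    ∀ (a : V4) (w : ℕ), 0 < w → (∀ e ∈ γ, e ∈ cubeEdges a w) →
      ∃ P : Finset Plaq, P ⊆ cubePlaqs a w ∧
        ∀ e : Edge, e ∈ γ ↔ Odd ((P.filter fun p => e ∈ plaqEdges p).card) := by
  obtain ⟨hne, hev⟩ := hγ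
  constructor
  · set a : V4 := fun m => γ.inf' hne (fun e' => e'.1 m) with haa
    have ha : ∀ e ∈ γ, ∀ m, a m ≤ e.1 m := fun e he m => Finset.inf'_le _ he
    obtain ⟨P, hPsub, hPbnd⟩ := GenLoopAux.master γ hev a ha
    refine ⟨P, ?_, hPbnd⟩
    intro p hp
    obtain ⟨e', he', hp⟩ := Finset.mem_biUnion.mp (hPsub hp)
    obtain ⟨m, _, hp⟩ := Finset.mem_biUnion.mp hp
    exact GenLoopAux.rect_lt hp
  · intro a w _ hcube
    have ha : ∀ e ∈ γ, ∀ m, a m ≤ e.1 m := by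
      intro e he m
      exact ((GenLoopAux.mem_cubeV_iff.mp (GenLoopAux.cubeEdge_props (hcube e he)).1) m).1
    obtain ⟨P, hPsub, hPbnd⟩ := GenLoopAux.master γ hev a ha
    refine ⟨P, ?_, hPbnd⟩
    intro p hp
    obtain ⟨e', he', hp⟩ := Finset.mem_biUnion.mp (hPsub hp)
    exact GenLoopAux.surf_subset_cubePlaqs (hcube e' he') hp
end
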